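/- arXiv:math/9712267 — 3 statements merged into one kernel-verified Lean document; each statement's English description precedes it below -/
import Mathlib

section
/- Let α > 0, let λ be a Young diagram with n = |λ| boxes, and let u, v be arbitrary complex numbers. Then ∑_{Λ : λ ↗ Λ} (c_α(b) + u)(c_α(b) + v) · κ_α(λ,Λ) · φ(Λ) = (nα + uv) · φ(λ), where the sum runs over all Young diagrams Λ obtained from λ by adding one box b = Λ∖λ. -/
/-- `ν` is obtained from `μ` by adding a single box (`μ ↗ ν`). -/
def YDCovers (μ ν : YoungDiagram) : Prop :=
  ∃ c ∉ μ.cells, ν.cells = insert c μ.cells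

/-- The arm length `a(b) = λᵢ − j` of a box `b = (i,j)` (0-indexed). -/
def armLen (μ : YoungDiagram) (b : ℕ × ℕ) : ℕ := μ.rowLen b.1 - b.2 - 1

/-- The leg length `l(b) = λ′ⱼ − i` of a box `b = (i,j)` (0-indexed). -/
def legLen (μ : YoungDiagram) (b : ℕ × ℕ) : ℕ := μ.colLen b.2 - b.1 - 1

/-- The Pieri multiplicity `κ_α(μ,ν)` for Jack symmetric functions, for `μ ↗ ν`:
the product over the boxes `b` of the column of `μ` containing the new box
`b₀ = ν ∖ μ` of `[(a(b)α+l(b)+2)((a(b)+1)α+l(b))] / [((a(b)+1)α+l(b)+1)(a(b)α+l(b)+1)]`,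
arm and leg lengths taken in `μ`. -/
noncomputable def jackMult (α : ℝ) (μ ν : YoungDiagram) : ℝ :=
  ∏ b0 ∈ ν.cells \ μ.cells, ∏ b ∈ μ.cells.filter (fun c => c.2 = b0.2),
    (((armLen μ b : ℝ) * α + (legLen μ b : ℝ) + 2) *
        (((armLen μ b : ℝ) + 1) * α + (legLen μ b : ℝ))) /
      ((((armLen μ b : ℝ) + 1) * α + (legLen μ b : ℝ) + 1) *
        ((armLen μ b : ℝ) * α + (legLen μ b : ℝ) + 1))

/-- `φ(μ) = ∏_{b∈μ} (a(b)α + l(b) + 1)⁻¹`. -/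
noncomputable def phiJack (α : ℝ) (μ : YoungDiagram) : ℝ :=
  ∏ b ∈ μ.cells, ((armLen μ b : ℝ) * α + (legLen μ b : ℝ) + 1)⁻¹

/-- The `α`-content `c_α(b) = α(j−1) − (i−1)` of a box `b = (i,j)` (0-indexed: `αj − i`). -/
noncomputable def alphaContent (α : ℝ) (b : ℕ × ℕ) : ℝ := α * (b.2 : ℝ) - (b.1 : ℝ)


open Finset

section JCSPartA
open Polynomial


variable {F : Type*} [Field F]

lemma jcs_prod_monic (m : ℕ) (g : ℕ → F) :
    (∏ t ∈ range m, (X - C (g t))).Monic :=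
  monic_prod_of_monic _ _ fun t _ => monic_X_sub_C _

lemma jcs_prod_natDegree (m : ℕ) (g : ℕ → F) :
    (∏ t ∈ range m, (X - C (g t))).natDegree = m := by
  rw [natDegree_prod]
  · simp
  · intro t _; exact X_sub_C_ne_zero _

lemma jcs_coeff_lead (m : ℕ) (g : ℕ → F) :
    (∏ t ∈ range m, (X - C (g t))).coeff m = 1 := by
  have := (jcs_prod_monic m g).coeff_natDegree
  rwa [jcs_prod_natDegree] at this

lemma jcs_coeff_top (m : ℕ) (g : ℕ → F) :
    (∏ t ∈ range (m+1), (X - C (g t))).coeff m = -∑ t ∈ range (m+1), g t := by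
  induction m with
  | zero => simp
  | succ k ih =>
    rw [prod_range_succ, mul_sub, coeff_sub, coeff_mul_X, ih, coeff_mul_C,
      jcs_coeff_lead]
    conv_rhs => rw [sum_range_succ]
    ring

lemma jcs_coeff_sub2 (m : ℕ) (g : ℕ → F) :
    (∏ t ∈ range (m+2), (X - C (g t))).coeff m
      = ∑ t ∈ range (m+2), ∑ s ∈ range t, g s * g t := by
  induction m with
  | zero =>
    rw [prod_range_succ, prod_range_one, mul_coeff_zero]
    simp [Finset.sum_range_succ]
  | succ k ih =>
    have htop : (∏ t ∈ range (k+2), (X - C (g t))).coeff (k+1) = -∑ t ∈ range (k+2), g t :=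
      jcs_coeff_top (k+1) g
    rw [show k+1+2 = (k+2)+1 by ring, prod_range_succ, mul_sub, coeff_sub, coeff_mul_X, ih,
      coeff_mul_C, htop]
    conv_rhs => rw [sum_range_succ, ← sum_mul]
    ring

lemma jcs_lagrangeSum (N : ℕ) (x : ℕ → F) (hx : Set.InjOn x (range (N+1)))
    (f : F[X]) (hf : f.degree < (N+1 : ℕ)) :
    ∑ i ∈ range (N+1), f.eval (x i) * ∏ j ∈ (range (N+1)).erase i, (x i - x j)⁻¹
      = f.coeff N := by
  have hf' : f.degree < (range (N+1)).card := by rwa [card_range]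
  conv_rhs => rw [Lagrange.eq_interpolate hx hf']
  rw [Lagrange.interpolate_apply, finset_sum_coeff]
  refine (Finset.sum_congr rfl fun i hi => ?_).symm
  rw [coeff_C_mul, Lagrange.basis_eq_prod_sub_inv_mul_nodal_div hi,
    ← Lagrange.nodal_erase_eq_nodal_div hi, coeff_C_mul]
  have hmon : (Lagrange.nodal ((range (N+1)).erase i) x).Monic := Lagrange.nodal_monic
  have hdeg : (Lagrange.nodal ((range (N+1)).erase i) x).natDegree = N := by
    rw [Lagrange.natDegree_nodal, card_erase_of_mem hi, card_range]
    omega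
  have hc : (Lagrange.nodal ((range (N+1)).erase i) x).coeff N = 1 := by
    have := hmon.coeff_natDegree; rwa [hdeg] at this
  rw [hc, Lagrange.nodalWeight]
  ring

lemma jcs_keyAlgebra (K : ℕ) (x : ℕ → F) (u v : F)
    (hx : ∀ i ∈ range (K+3), ∀ j ∈ range (K+3), i ≠ j → x i ≠ x j) :
    ∑ i ∈ range (K+3), ((x i + u) * (x i + v) * ∏ t ∈ range (K+2), (x i - x t + 1)) *
        ∏ j ∈ (range (K+3)).erase i, (x i - x j)⁻¹
      = u*v - (u+v) * (∑ t ∈ range (K+2), (x t - 1))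
        + (∑ t ∈ range (K+2), ∑ s ∈ range t, (x s - 1) * (x t - 1))
        + (∑ i ∈ range (K+3), x i) * (u+v)
        - (∑ i ∈ range (K+3), x i) * (∑ t ∈ range (K+2), (x t - 1))
        + (∑ i ∈ range (K+3), x i)^2
        - (∑ t ∈ range (K+3), ∑ s ∈ range t, x s * x t) := by
  set Sw := ∑ t ∈ range (K+2), (x t - 1) with hSw
  set A := ∑ i ∈ range (K+3), x i with hA
  set E2w := ∑ t ∈ range (K+2), ∑ s ∈ range t, (x s - 1) * (x t - 1) with hE2w
  set B := ∑ t ∈ range (K+3), ∑ s ∈ range t, x s * x t with hB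
  set W : F[X] := ∏ t ∈ range (K+2), (X - C (x t - 1)) with hW
  set M : F[X] := ∏ i ∈ range (K+3), (X - C (x i)) with hM
  set f : F[X] := (X + C u) * (X + C v) * W with hf
  set c : F := (u+v) - Sw + A with hc
  set g : F[X] := f - (X + C c) * M with hg
  -- coefficients of W and M
  have hW2 : W.coeff (K+2) = 1 := jcs_coeff_lead (K+2) _
  have hW1 : W.coeff (K+1) = -Sw := jcs_coeff_top (K+1) _
  have hW0 : W.coeff K = E2w := jcs_coeff_sub2 K _
  have hW3 : W.coeff (K+3) = 0 :=
    coeff_eq_zero_of_natDegree_lt (by rw [hW, jcs_prod_natDegree]; omega)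
  have hM3 : M.coeff (K+3) = 1 := jcs_coeff_lead (K+3) _
  have hM2 : M.coeff (K+2) = -A := jcs_coeff_top (K+2) _
  have hM1 : M.coeff (K+1) = B := jcs_coeff_sub2 (K+1) _
  -- coefficients of f
  have hfexp : f = W * X^2 + (W * X) * C (u+v) + W * C (u*v) := by rw [hf, C_add, C_mul]; ring
  have p21 : (W * X^2).coeff (K+3) = W.coeff (K+1) := coeff_mul_X_pow W 2 (K+1)
  have p20 : (W * X^2).coeff (K+2) = W.coeff K := coeff_mul_X_pow W 2 K
  have p11 : (W * X).coeff (K+3) = W.coeff (K+2) := coeff_mul_X W (K+2)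
  have p10 : (W * X).coeff (K+2) = W.coeff (K+1) := coeff_mul_X W (K+1)
  have hf3 : f.coeff (K+3) = -Sw + (u+v) := by
    rw [hfexp, coeff_add, coeff_add, coeff_mul_C, coeff_mul_C, p21, p11, hW1, hW2, hW3]
    ring
  have hf2 : f.coeff (K+2) = E2w - Sw*(u+v) + u*v := by
    rw [hfexp, coeff_add, coeff_add, coeff_mul_C, coeff_mul_C, p20, p10, hW0, hW1, hW2]
    ring
  -- coefficients of (X + C c) * M
  have hq : (X + C c) * M = M * X + M * C c := by ring
  have q3 : ((X + C c) * M).coeff (K+3) = M.coeff (K+2) + M.coeff (K+3) * c := by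
    rw [hq, coeff_add, coeff_mul_C, coeff_mul_X M (K+2)]
  have q2 : ((X + C c) * M).coeff (K+2) = M.coeff (K+1) + M.coeff (K+2) * c := by
    rw [hq, coeff_add, coeff_mul_C, coeff_mul_X M (K+1)]
  -- monicity and degrees
  have hfMon : f.Monic := ((monic_X_add_C u).mul (monic_X_add_C v)).mul (jcs_prod_monic _ _)
  have hfDeg : f.natDegree = K+4 := by
    rw [hf, ((monic_X_add_C u).mul (monic_X_add_C v)).natDegree_mul (jcs_prod_monic _ _),
      (monic_X_add_C u).natDegree_mul (monic_X_add_C v), natDegree_X_add_C, natDegree_X_add_C,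
      jcs_prod_natDegree]
    omega
  have hpMon : ((X + C c) * M).Monic := (monic_X_add_C c).mul (jcs_prod_monic _ _)
  have hpDeg : ((X + C c) * M).natDegree = K+4 := by
    rw [(monic_X_add_C c).natDegree_mul (jcs_prod_monic _ _), natDegree_X_add_C,
      jcs_prod_natDegree]
    omega
  -- degree of g
  have hgdeg : g.degree < ((K+3 : ℕ) : WithBot ℕ) := by
    rw [degree_lt_iff_coeff_zero]
    intro m hm
    have hm' : K + 3 ≤ m := by exact_mod_cast hm
    rw [hg, coeff_sub]
    rcases eq_or_lt_of_le hm' with h | h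
    · subst h
      rw [hf3, q3, hM2, hM3, hc]; ring
    · rcases eq_or_lt_of_le (Nat.succ_le_of_lt h) with h4 | h4
      · subst h4
        have e1 : f.coeff (K+4) = 1 := by rw [← hfDeg]; exact hfMon.coeff_natDegree
        have e2 : ((X + C c) * M).coeff (K+4) = 1 := by rw [← hpDeg]; exact hpMon.coeff_natDegree
        rw [show (K+3).succ = K+4 from rfl, e1, e2]
        ring
      · rw [coeff_eq_zero_of_natDegree_lt (by omega : f.natDegree < m),
          coeff_eq_zero_of_natDegree_lt (by omega : ((X + C c) * M).natDegree < m)]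
        ring
  -- evaluations
  have hMeval : ∀ i ∈ range (K+3), M.eval (x i) = 0 := by
    intro i hi
    rw [hM, eval_prod]
    exact Finset.prod_eq_zero hi (by simp)
  have hfeval : ∀ i ∈ range (K+3), f.eval (x i)
      = (x i + u) * (x i + v) * ∏ t ∈ range (K+2), (x i - x t + 1) := by
    intro i _
    rw [hf, eval_mul, eval_mul, eval_add, eval_add, eval_X, eval_C, eval_C, hW, eval_prod]
    congr 1
    exact Finset.prod_congr rfl fun t _ => by rw [eval_sub, eval_X, eval_C]; ring
  have hInj : Set.InjOn x (range (K+3)) := by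
    intro a ha b hb hab
    by_contra hne
    exact hx a (by simpa using ha) b (by simpa using hb) hne hab
  have key := jcs_lagrangeSum (K+2) x hInj g hgdeg
  calc ∑ i ∈ range (K+3), ((x i + u) * (x i + v) * ∏ t ∈ range (K+2), (x i - x t + 1)) *
        ∏ j ∈ (range (K+3)).erase i, (x i - x j)⁻¹
      = ∑ i ∈ range (K+3), g.eval (x i) * ∏ j ∈ (range (K+3)).erase i, (x i - x j)⁻¹ := by
        refine Finset.sum_congr rfl fun i hi => ?_
        have hz : eval (x i) ((X + C c) * M) = 0 := by rw [eval_mul, hMeval i hi, mul_zero]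
        rw [hg, eval_sub, hz, sub_zero, hfeval i hi]
    _ = g.coeff (K+2) := key
    _ = f.coeff (K+2) - ((X + C c) * M).coeff (K+2) := by rw [hg, coeff_sub]
    _ = _ := by rw [hf2, q2, hM1, hM2, hc]; ring

end JCSPartA

section JCSPartB


variable {F : Type*} [Field F]

lemma jcs_doubleSum (m : ℕ) (y : ℕ → F) :
    (∑ t ∈ range m, ∑ s ∈ range t, (y s + y t)) + ∑ t ∈ range m, y t
      = (m : F) * ∑ t ∈ range m, y t := by
  induction m with
  | zero => simp
  | succ k ih =>
    rw [sum_range_succ (fun t => ∑ s ∈ range t, (y s + y t)), sum_range_succ y]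
    have hin : ∑ s ∈ range k, (y s + y k) = (∑ s ∈ range k, y s) + (k : F) * y k := by
      rw [sum_add_distrib, sum_const, card_range, nsmul_eq_mul]
    rw [hin]
    push_cast
    linear_combination ih

lemma jcs_rhsValue (K n : ℕ) (α : ℂ) (r : ℕ → ℕ) (hrK : r (K+2) = 0)
    (hn : (n : ℂ) = ∑ t ∈ range (K+2), (r t : ℂ)) (u v : ℂ)
    (x : ℕ → ℂ) (hx : ∀ t, x t = α * (r t : ℂ) - (t : ℂ)) :
    u*v - (u+v) * (∑ t ∈ range (K+2), (x t - 1))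
      + (∑ t ∈ range (K+2), ∑ s ∈ range t, (x s - 1) * (x t - 1))
      + (∑ i ∈ range (K+3), x i) * (u+v)
      - (∑ i ∈ range (K+3), x i) * (∑ t ∈ range (K+2), (x t - 1))
      + (∑ i ∈ range (K+3), x i)^2
      - (∑ t ∈ range (K+3), ∑ s ∈ range t, x s * x t)
      = (n : ℂ) * α + u * v := by
  have hxK2 : x (K+2) = -((K:ℂ)+2) := by rw [hx, hrK]; push_cast; ring
  set T := ∑ t ∈ range (K+2), (t : ℂ) with hT
  set A' := ∑ t ∈ range (K+2), x t with hA'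
  set E2 := ∑ t ∈ range (K+2), ∑ s ∈ range t, x s * x t with hE2
  have h1 : ∑ t ∈ range (K+2), (x t - 1) = A' - ((K:ℂ)+2) := by
    rw [sum_sub_distrib, sum_const, card_range, nsmul_eq_mul, hA']
    push_cast; ring
  have h2 : ∑ i ∈ range (K+3), x i = A' - ((K:ℂ)+2) := by
    rw [show K+3 = (K+2)+1 from rfl, sum_range_succ, hxK2, hA']
    ring
  have hD : (∑ t ∈ range (K+2), ∑ s ∈ range t, (x s + x t))
      = ((K:ℂ)+2) * A' - A' := by
    have := jcs_doubleSum (K+2) x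
    push_cast at this
    linear_combination this
  have h3 : ∑ t ∈ range (K+2), ∑ s ∈ range t, (x s - 1) * (x t - 1)
      = E2 + T - (((K:ℂ)+2) * A' - A') := by
    rw [← hD, hE2, hT]
    rw [← sum_add_distrib, ← sum_sub_distrib]
    refine Finset.sum_congr rfl fun t _ => ?_
    have ht : (t : ℂ) = ∑ s ∈ range t, (1 : ℂ) := by
      rw [sum_const, card_range, nsmul_eq_mul, mul_one]
    rw [ht, ← sum_add_distrib, ← sum_sub_distrib]
    exact Finset.sum_congr rfl fun s _ => by ring
  have h4 : ∑ t ∈ range (K+3), ∑ s ∈ range t, x s * x t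
      = E2 + A' * x (K+2) := by
    rw [show K+3 = (K+2)+1 from rfl, sum_range_succ, hE2, hA', ← sum_mul]
  have h5 : A' = α * (n:ℂ) - T := by
    rw [hA', hT, hn, mul_sum, ← sum_sub_distrib]
    exact Finset.sum_congr rfl fun t _ => by rw [hx]
  rw [h1, h2, h3, h4, hxK2, h5]
  ring

end JCSPartB




def jcsAddable (μ : YoungDiagram) (i : ℕ) : Prop := i = 0 ∨ μ.rowLen i < μ.rowLen (i-1)

instance jcsAddable.dec (μ : YoungDiagram) (i : ℕ) : Decidable (jcsAddable μ i) := by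
  unfold jcsAddable; infer_instance

lemma jcs_lowerSet (μ : YoungDiagram) (i : ℕ) (h : jcsAddable μ i) :
    IsLowerSet (↑(insert (i, μ.rowLen i) μ.cells) : Set (ℕ × ℕ)) := by
  intro a b hba ha
  simp only [Finset.coe_insert, Set.mem_insert_iff, Finset.mem_coe, YoungDiagram.mem_cells]
    at ha ⊢
  obtain ⟨b1, b2⟩ := b
  obtain hba1 : b1 ≤ a.1 := hba.1
  obtain hba2 : b2 ≤ a.2 := hba.2
  rcases ha with ha | ha
  · -- a = (i, rowLen i)
    rw [ha] at hba1 hba2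
    by_cases hb1 : b1 = i
    · subst hb1
      rcases lt_or_eq_of_le hba2 with h2 | h2
      · exact Or.inr (YoungDiagram.mem_iff_lt_rowLen.mpr h2)
      · exact Or.inl (by rw [h2])
    · refine Or.inr (YoungDiagram.mem_iff_lt_rowLen.mpr ?_)
      have hi : i ≠ 0 := by rintro rfl; omega
      rcases h with h | h
      · exact absurd h hi
      · have hb1' : b1 ≤ i - 1 := by omega
        have := μ.rowLen_anti b1 (i-1) hb1'
        omega
  · exact Or.inr (μ.isLowerSet hba (by simpa using ha))

noncomputable def jcsGrow (μ : YoungDiagram) (i : ℕ) : YoungDiagram :=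
  if h : jcsAddable μ i then ⟨insert (i, μ.rowLen i) μ.cells, jcs_lowerSet μ i h⟩ else μ

lemma jcsGrow_cells {μ : YoungDiagram} {i : ℕ} (h : jcsAddable μ i) :
    (jcsGrow μ i).cells = insert (i, μ.rowLen i) μ.cells := by
  rw [jcsGrow, dif_pos h]

lemma jcs_new_not_mem (μ : YoungDiagram) (i : ℕ) : (i, μ.rowLen i) ∉ μ := by
  rw [YoungDiagram.mem_iff_lt_rowLen]; omega

lemma jcs_mem_grow {μ : YoungDiagram} {i : ℕ} (h : jcsAddable μ i) (c : ℕ × ℕ) :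
    c ∈ jcsGrow μ i ↔ c = (i, μ.rowLen i) ∨ c ∈ μ := by
  rw [← YoungDiagram.mem_cells, jcsGrow_cells h, Finset.mem_insert, YoungDiagram.mem_cells]

lemma jcs_covers_iff (μ Λ : YoungDiagram) :
    YDCovers μ Λ ↔ ∃ i, jcsAddable μ i ∧ Λ = jcsGrow μ i := by
  constructor
  · rintro ⟨⟨c1, c2⟩, hc, hcells⟩
    rw [YoungDiagram.mem_cells] at hc
    have hmemΛ : ∀ d : ℕ × ℕ, d ∈ Λ ↔ d = (c1, c2) ∨ d ∈ μ := by
      intro d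
      rw [← YoungDiagram.mem_cells, hcells, Finset.mem_insert, YoungDiagram.mem_cells]
    have hcΛ : (c1, c2) ∈ Λ := (hmemΛ _).mpr (Or.inl rfl)
    -- c2 = rowLen c1
    have hrow : ∀ b2 < c2, (c1, b2) ∈ μ := by
      intro b2 hb2
      have : (c1, b2) ∈ Λ := Λ.isLowerSet (by constructor <;> simp [le_of_lt hb2]) hcΛ
      rcases (hmemΛ _).mp this with he | he
      · exact absurd (congrArg Prod.snd he) (by simp; omega)
      · exact he
    have hc2 : c2 = μ.rowLen c1 := by
      have h1 : μ.rowLen c1 ≤ c2 := by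
        by_contra hcon
        exact hc (YoungDiagram.mem_iff_lt_rowLen.mpr (by omega))
      have h2 : c2 ≤ μ.rowLen c1 := by
        rcases Nat.eq_zero_or_pos c2 with h0 | h0
        · omega
        · have := YoungDiagram.mem_iff_lt_rowLen.mp (hrow (c2-1) (by omega))
          omega
      omega
    have hadd : jcsAddable μ c1 := by
      rcases Nat.eq_zero_or_pos c1 with h0 | h0
      · exact Or.inl h0
      · refine Or.inr ?_
        have : (c1 - 1, c2) ∈ Λ := Λ.isLowerSet (by constructor <;> simp <;> omega) hcΛ
        rcases (hmemΛ _).mp this with he | he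
        · exact absurd (congrArg Prod.fst he) (by simp; omega)
        · have := YoungDiagram.mem_iff_lt_rowLen.mp he
          omega
      
    refine ⟨c1, hadd, ?_⟩
    ext d
    rw [YoungDiagram.mem_cells, hmemΛ d, YoungDiagram.mem_cells, jcs_mem_grow hadd d, hc2]
  · rintro ⟨i, hi, rfl⟩
    exact ⟨(i, μ.rowLen i), by simpa using jcs_new_not_mem μ i, jcsGrow_cells hi⟩

lemma jcs_rowLen_eq (μ : YoungDiagram) (t k : ℕ) (h : ∀ b, (t, b) ∈ μ ↔ b < k) :
    μ.rowLen t = k := by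
  have hk : ∀ b, b < μ.rowLen t ↔ b < k := fun b =>
    (YoungDiagram.mem_iff_lt_rowLen (i := t) (j := b)).symm.trans (h b)
  rcases Nat.lt_trichotomy (μ.rowLen t) k with hl | he | hl
  · have := (hk (μ.rowLen t)).mpr hl; omega
  · exact he
  · have := (hk k).mp hl; omega

lemma jcs_colLen_eq (μ : YoungDiagram) (t k : ℕ) (h : ∀ b, (b, t) ∈ μ ↔ b < k) :
    μ.colLen t = k := by
  have hk : ∀ b, b < μ.colLen t ↔ b < k := fun b =>
    (YoungDiagram.mem_iff_lt_colLen (i := b) (j := t)).symm.trans (h b)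
  rcases Nat.lt_trichotomy (μ.colLen t) k with hl | he | hl
  · have := (hk (μ.colLen t)).mpr hl; omega
  · exact he
  · have := (hk k).mp hl; omega

lemma jcs_colLen_rowLen {μ : YoungDiagram} {i : ℕ} (h : jcsAddable μ i) :
    μ.colLen (μ.rowLen i) = i := by
  apply jcs_colLen_eq
  intro b
  rw [YoungDiagram.mem_iff_lt_rowLen]
  constructor
  · intro hb
    by_contra hbi
    have := μ.rowLen_anti i b (by omega)
    omega
  · intro hb
    have hi : i ≠ 0 := by omega
    rcases h with h | h
    · exact absurd h hi
    · have := μ.rowLen_anti b (i-1) (by omega)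
      omega

lemma jcs_grow_rowLen {μ : YoungDiagram} {i : ℕ} (h : jcsAddable μ i) (t : ℕ) :
    (jcsGrow μ i).rowLen t = μ.rowLen t + if t = i then 1 else 0 := by
  apply jcs_rowLen_eq
  intro b
  rw [jcs_mem_grow h, YoungDiagram.mem_iff_lt_rowLen, Prod.mk.injEq]
  by_cases ht : t = i
  · subst ht; simp; omega
  · simp [ht]

lemma jcs_grow_colLen {μ : YoungDiagram} {i : ℕ} (h : jcsAddable μ i) (s : ℕ) :
    (jcsGrow μ i).colLen s = μ.colLen s + if s = μ.rowLen i then 1 else 0 := by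
  apply jcs_colLen_eq
  intro b
  rw [jcs_mem_grow h, YoungDiagram.mem_iff_lt_colLen, Prod.mk.injEq]
  by_cases hs : s = μ.rowLen i
  · subst hs
    rw [jcs_colLen_rowLen h]
    simp; omega
  · simp [hs]

lemma jcs_grow_inj {μ : YoungDiagram} {i j : ℕ} (hi : jcsAddable μ i) (hj : jcsAddable μ j)
    (he : jcsGrow μ i = jcsGrow μ j) : i = j := by
  have : (i, μ.rowLen i) ∈ jcsGrow μ j := by
    rw [← he, jcs_mem_grow hi]; exact Or.inl rfl
  rw [jcs_mem_grow hj] at this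
  rcases this with h | h
  · exact congrArg Prod.fst h
  · exact absurd h (jcs_new_not_mem μ i)

lemma jcs_colLen_le_card (μ : YoungDiagram) (j : ℕ) : μ.colLen j ≤ μ.card := by
  rw [μ.colLen_eq_card]
  exact Finset.card_le_card (Finset.filter_subset _ _)

lemma jcs_rowLen_zero {μ : YoungDiagram} {m : ℕ} (hm : μ.card ≤ m) : μ.rowLen m = 0 := by
  by_contra hc
  have h1 : (m, 0) ∈ μ := YoungDiagram.mem_iff_lt_rowLen.mpr (by omega)
  have h2 := YoungDiagram.mem_iff_lt_colLen.mp h1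
  have := jcs_colLen_le_card μ 0
  omega

lemma jcs_addable_le_card {μ : YoungDiagram} {i : ℕ} (h : jcsAddable μ i) : i ≤ μ.card := by
  rcases h with h | h
  · omega
  · have h1 : (i-1, 0) ∈ μ := YoungDiagram.mem_iff_lt_rowLen.mpr (by omega)
    have h2 := YoungDiagram.mem_iff_lt_colLen.mp h1
    have := jcs_colLen_le_card μ 0
    omega

lemma jcs_card_eq_sum {μ : YoungDiagram} {m : ℕ} (hm : μ.colLen 0 ≤ m) :
    μ.card = ∑ t ∈ range m, μ.rowLen t := by
  show μ.cells.card = _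
  rw [Finset.card_eq_sum_card_fiberwise (f := Prod.fst) (t := range m)]
  · refine Finset.sum_congr rfl fun t _ => ?_
    rw [μ.rowLen_eq_card, YoungDiagram.row]
  · intro c hc
    rw [Finset.mem_coe, Finset.mem_range]
    rw [Finset.mem_coe, YoungDiagram.mem_cells] at hc
    have h1 := YoungDiagram.mem_iff_lt_colLen.mp hc
    have := μ.colLen_anti 0 c.2 (by omega)
    omega

noncomputable def jcsPhiFac (α : ℝ) (ν : YoungDiagram) (b : ℕ × ℕ) : ℝ :=
  ((armLen ν b : ℝ) * α + (legLen ν b : ℝ) + 1)⁻¹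

noncomputable def jcsKapFac (α : ℝ) (μ : YoungDiagram) (b : ℕ × ℕ) : ℝ :=
  (((armLen μ b : ℝ) * α + (legLen μ b : ℝ) + 2) *
      (((armLen μ b : ℝ) + 1) * α + (legLen μ b : ℝ))) /
    ((((armLen μ b : ℝ) + 1) * α + (legLen μ b : ℝ) + 1) *
      ((armLen μ b : ℝ) * α + (legLen μ b : ℝ) + 1))

noncomputable def jcsX (α : ℝ) (μ : YoungDiagram) (t : ℕ) : ℝ := α * (μ.rowLen t : ℝ) - t

noncomputable def jcsE (α : ℝ) (μ : YoungDiagram) (t : ℕ) : ℝ := α * t - (μ.colLen t : ℝ)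

noncomputable def jcsRowFac (α : ℝ) (μ : YoungDiagram) (i t : ℕ) : ℝ :=
  (jcsX α μ i - jcsE α μ t - α) / (jcsX α μ i - jcsE α μ t)

noncomputable def jcsColFac (α : ℝ) (μ : YoungDiagram) (i t : ℕ) : ℝ :=
  (jcsX α μ i - jcsX α μ t + 1) / (jcsX α μ i - jcsX α μ t)

lemma jcs_arm_grow {μ : YoungDiagram} {i : ℕ} (h : jcsAddable μ i) {b : ℕ × ℕ}
    (hb : b ∈ μ.cells) :
    armLen (jcsGrow μ i) b = armLen μ b + if b.1 = i then 1 else 0 := by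
  obtain ⟨b1, b2⟩ := b
  have hmem : b2 < μ.rowLen b1 := by
    rw [YoungDiagram.mem_cells, YoungDiagram.mem_iff_lt_rowLen] at hb; exact hb
  unfold armLen
  rw [jcs_grow_rowLen h]
  by_cases hb1 : b1 = i
  · subst hb1; simp only [if_pos rfl]; omega
  · simp only [if_neg hb1]; omega

lemma jcs_leg_grow {μ : YoungDiagram} {i : ℕ} (h : jcsAddable μ i) {b : ℕ × ℕ}
    (hb : b ∈ μ.cells) :
    legLen (jcsGrow μ i) b = legLen μ b + if b.2 = μ.rowLen i then 1 else 0 := by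
  obtain ⟨b1, b2⟩ := b
  have hmem : b1 < μ.colLen b2 := by
    rw [YoungDiagram.mem_cells, YoungDiagram.mem_iff_lt_colLen] at hb; exact hb
  unfold legLen
  rw [jcs_grow_colLen h]
  by_cases hb2 : b2 = μ.rowLen i
  · subst hb2
    simp only [if_pos rfl]
    have : μ.colLen (μ.rowLen i) = i := jcs_colLen_rowLen h
    omega
  · simp only [if_neg hb2]; omega

lemma jcs_pos {α : ℝ} (hα : 0 < α) (A L : ℝ) (hA : 0 ≤ A) (hL : 0 ≤ L) :
    0 < A * α + L + 1 := by nlinarith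


lemma jcs_diff {μ : YoungDiagram} {i : ℕ} (h : jcsAddable μ i) :
    (jcsGrow μ i).cells \ μ.cells = {(i, μ.rowLen i)} := by
  have hnotmem : (i, μ.rowLen i) ∉ μ.cells := by
    rw [YoungDiagram.mem_cells]; exact jcs_new_not_mem μ i
  rw [jcsGrow_cells h]
  ext c
  simp only [Finset.mem_sdiff, Finset.mem_insert, Finset.mem_singleton]
  constructor
  · rintro ⟨hc | hc, hnc⟩
    · exact hc
    · exact absurd hc hnc
  · rintro rfl
    exact ⟨Or.inl rfl, hnotmem⟩

lemma jcs_pointwise (α : ℝ) (hα : 0 < α) (μ : YoungDiagram) (i : ℕ) (h : jcsAddable μ i)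
    (b : ℕ × ℕ) (hb : b ∈ μ.cells) :
    (if b.2 = μ.rowLen i then jcsKapFac α μ b else 1) * jcsPhiFac α (jcsGrow μ i) b
      = jcsPhiFac α μ b *
        ((if b.1 = i then jcsRowFac α μ i b.2 else 1) *
          (if b.2 = μ.rowLen i then jcsColFac α μ i b.1 else 1)) := by
  obtain ⟨b1, b2⟩ := b
  have hmemr : b2 < μ.rowLen b1 := by
    rw [YoungDiagram.mem_cells, YoungDiagram.mem_iff_lt_rowLen] at hb; exact hb
  have hmemc : b1 < μ.colLen b2 := by
    rw [YoungDiagram.mem_cells] at hb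
    exact YoungDiagram.mem_iff_lt_colLen.mp hb
  have harm : armLen (jcsGrow μ i) (b1, b2) = armLen μ (b1, b2) + if b1 = i then 1 else 0 :=
    jcs_arm_grow h hb
  have hleg : legLen (jcsGrow μ i) (b1, b2)
      = legLen μ (b1, b2) + if b2 = μ.rowLen i then 1 else 0 := jcs_leg_grow h hb
  set A := (armLen μ (b1, b2) : ℝ) with hA
  set L := (legLen μ (b1, b2) : ℝ) with hL
  have hA0 : 0 ≤ A := Nat.cast_nonneg _
  have hL0 : 0 ≤ L := Nat.cast_nonneg _
  have hp1 : 0 < A * α + L + 1 := jcs_pos hα A L hA0 hL0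
  have hp2 : 0 < (A + 1) * α + L + 1 := by nlinarith
  have hp3 : 0 < A * α + L + 2 := by nlinarith
  have h1 := hp1.ne'
  have h2 := hp2.ne'
  have h3 := hp3.ne'
  by_cases hb1 : b1 = i
  · by_cases hb2 : b2 = μ.rowLen i
    · exfalso
      rw [YoungDiagram.mem_cells] at hb
      rw [hb1, hb2] at hb
      exact jcs_new_not_mem μ i hb
    · -- row case
      have hri : μ.rowLen b1 = μ.rowLen i := by rw [hb1]
      have hb2i : b2 < μ.rowLen i := hri ▸ hmemr
      have hAn : armLen μ (b1, b2) = μ.rowLen i - b2 - 1 := by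
        show μ.rowLen b1 - b2 - 1 = _
        rw [hri]
      have hLn : legLen μ (b1, b2) = μ.colLen b2 - b1 - 1 := rfl
      have hAv : A = (μ.rowLen i : ℝ) - b2 - 1 := by
        rw [hA, hAn, Nat.cast_sub (by omega), Nat.cast_sub (by omega), Nat.cast_one]
      have hLv : L = (μ.colLen b2 : ℝ) - i - 1 := by
        rw [hL, hLn, Nat.cast_sub (by omega), Nat.cast_sub (by omega), Nat.cast_one, hb1]
      have hAcast : ((armLen (jcsGrow μ i) (b1, b2) : ℕ) : ℝ) = A + 1 := by
        rw [harm, if_pos hb1]; push_cast; rw [hA]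
      have hLcast : ((legLen (jcsGrow μ i) (b1, b2) : ℕ) : ℝ) = L := by
        rw [hleg, if_neg hb2, Nat.add_zero]
      have hnum : jcsX α μ i - jcsE α μ b2 - α = A * α + L + 1 := by
        unfold jcsX jcsE; rw [hAv, hLv]; ring
      have hden : jcsX α μ i - jcsE α μ b2 = (A + 1) * α + L + 1 := by
        unfold jcsX jcsE; rw [hAv, hLv]; ring
      rw [if_neg hb2, if_neg hb2, if_pos hb1]
      unfold jcsPhiFac jcsRowFac
      rw [hAcast, hLcast, hnum, hden, ← hA, ← hL, mul_one, one_mul]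
      field_simp
  · by_cases hb2 : b2 = μ.rowLen i
    · -- column case
      have hcl : μ.colLen (μ.rowLen i) = i := jcs_colLen_rowLen h
      have hb1lt : b1 < i := by
        rw [hb2, hcl] at hmemc; exact hmemc
      have hjlt : μ.rowLen i < μ.rowLen b1 := by rw [← hb2]; exact hmemr
      have hAn : armLen μ (b1, b2) = μ.rowLen b1 - μ.rowLen i - 1 := by
        show μ.rowLen b1 - b2 - 1 = _
        rw [hb2]
      have hLn : legLen μ (b1, b2) = i - b1 - 1 := by
        show μ.colLen b2 - b1 - 1 = _
        rw [hb2, hcl]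
      have hAv : A = (μ.rowLen b1 : ℝ) - (μ.rowLen i : ℝ) - 1 := by
        rw [hA, hAn, Nat.cast_sub (by omega), Nat.cast_sub (by omega), Nat.cast_one]
      have hLv : L = (i : ℝ) - b1 - 1 := by
        rw [hL, hLn, Nat.cast_sub (by omega), Nat.cast_sub (by omega), Nat.cast_one]
      have hAcast : ((armLen (jcsGrow μ i) (b1, b2) : ℕ) : ℝ) = A := by
        rw [harm, if_neg hb1, Nat.add_zero]
      have hLcast : ((legLen (jcsGrow μ i) (b1, b2) : ℕ) : ℝ) = L + 1 := by
        rw [hleg, if_pos hb2]; push_cast; rw [hL]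
      have hnum : jcsX α μ i - jcsX α μ b1 + 1 = -((A + 1) * α + L) := by
        unfold jcsX; rw [hAv, hLv]; ring
      have hden : jcsX α μ i - jcsX α μ b1 = -((A + 1) * α + L + 1) := by
        unfold jcsX; rw [hAv, hLv]; ring
      rw [if_pos hb2, if_pos hb2, if_neg hb1]
      unfold jcsPhiFac jcsColFac jcsKapFac
      rw [hAcast, hLcast, hnum, hden, ← hA, ← hL, neg_div_neg_eq, one_mul]
      field_simp
      ring
    · -- unchanged case
      rw [if_neg hb2, if_neg hb2, if_neg hb1, one_mul, mul_one, mul_one]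
      unfold jcsPhiFac
      rw [harm, hleg, if_neg hb1, if_neg hb2]
      norm_num

lemma jcs_arm_new {μ : YoungDiagram} {i : ℕ} (h : jcsAddable μ i) :
    armLen (jcsGrow μ i) (i, μ.rowLen i) = 0 := by
  show (jcsGrow μ i).rowLen i - μ.rowLen i - 1 = 0
  rw [jcs_grow_rowLen h]
  simp

lemma jcs_leg_new {μ : YoungDiagram} {i : ℕ} (h : jcsAddable μ i) :
    legLen (jcsGrow μ i) (i, μ.rowLen i) = 0 := by
  show (jcsGrow μ i).colLen (μ.rowLen i) - i - 1 = 0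
  rw [jcs_grow_colLen h, jcs_colLen_rowLen h]
  simp

lemma jcs_phi_def (α : ℝ) (ν : YoungDiagram) :
    phiJack α ν = ∏ b ∈ ν.cells, jcsPhiFac α ν b := rfl

lemma jcs_jack_phi (α : ℝ) (hα : 0 < α) (μ : YoungDiagram) (i : ℕ) (h : jcsAddable μ i) :
    jackMult α μ (jcsGrow μ i) * phiJack α (jcsGrow μ i)
      = phiJack α μ * (∏ t ∈ range (μ.rowLen i), jcsRowFac α μ i t)
        * (∏ t ∈ range i, jcsColFac α μ i t) := by
  classical
  have hnotmem : (i, μ.rowLen i) ∉ μ.cells := by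
    rw [YoungDiagram.mem_cells]; exact jcs_new_not_mem μ i
  have hdiff : (jcsGrow μ i).cells \ μ.cells = {(i, μ.rowLen i)} := jcs_diff h
  have hjack : jackMult α μ (jcsGrow μ i)
      = ∏ b ∈ μ.cells.filter (fun c => c.2 = μ.rowLen i), jcsKapFac α μ b := by
    rw [jackMult, hdiff, Finset.prod_singleton]
    rfl
  have hnew1 : jcsPhiFac α (jcsGrow μ i) (i, μ.rowLen i) = 1 := by
    unfold jcsPhiFac
    rw [jcs_arm_new h, jcs_leg_new h]
    norm_num
  have hphi : phiJack α (jcsGrow μ i) = ∏ b ∈ μ.cells, jcsPhiFac α (jcsGrow μ i) b := by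
    rw [jcs_phi_def, jcsGrow_cells h, Finset.prod_insert hnotmem, hnew1, one_mul]
  rw [hjack, hphi, Finset.prod_filter, ← Finset.prod_mul_distrib,
    Finset.prod_congr rfl (fun b hb => jcs_pointwise α hα μ i h b hb),
    Finset.prod_mul_distrib, Finset.prod_mul_distrib, ← Finset.prod_filter,
    ← Finset.prod_filter]
  have hrowset : μ.cells.filter (fun c : ℕ × ℕ => c.1 = i)
      = (range (μ.rowLen i)).image (fun t => (i, t)) := by
    ext ⟨a, b⟩
    simp only [Finset.mem_filter, Finset.mem_image, Finset.mem_range, YoungDiagram.mem_cells]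
    constructor
    · rintro ⟨hab, ha⟩
      rw [ha] at hab
      exact ⟨b, YoungDiagram.mem_iff_lt_rowLen.mp hab, by rw [ha]⟩
    · rintro ⟨t, ht, heq⟩
      injection heq with h1 h2
      subst h1; subst h2
      exact ⟨YoungDiagram.mem_iff_lt_rowLen.mpr ht, rfl⟩
  have hcolset : μ.cells.filter (fun c : ℕ × ℕ => c.2 = μ.rowLen i)
      = (range i).image (fun t => (t, μ.rowLen i)) := by
    ext ⟨a, b⟩
    simp only [Finset.mem_filter, Finset.mem_image, Finset.mem_range, YoungDiagram.mem_cells]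
    constructor
    · rintro ⟨hab, hbv⟩
      rw [hbv] at hab
      have := YoungDiagram.mem_iff_lt_colLen.mp hab
      rw [jcs_colLen_rowLen h] at this
      exact ⟨a, this, by rw [hbv]⟩
    · rintro ⟨t, ht, heq⟩
      injection heq with h1 h2
      subst h1; subst h2
      refine ⟨YoungDiagram.mem_iff_lt_colLen.mpr ?_, rfl⟩
      rw [jcs_colLen_rowLen h]
      exact ht
  rw [hrowset, hcolset,
    Finset.prod_image (fun x _ y _ e => congrArg Prod.snd e),
    Finset.prod_image (fun x _ y _ e => congrArg Prod.fst e), ← jcs_phi_def]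
  ring

lemma jcs_teleratio (g : ℕ → ℝ) (a b : ℕ) (hab : a ≤ b)
    (hg : ∀ t, a ≤ t → t ≤ b → g t ≠ 0) :
    ∏ t ∈ Ico a b, (g (t+1) / g t) = g b / g a := by
  induction b, hab using Nat.le_induction with
  | base => rw [Ico_self, prod_empty, div_self (hg a le_rfl le_rfl)]
  | succ b hab ih =>
    rw [Finset.prod_Ico_succ_top hab, ih (fun t h1 h2 => hg t h1 (by omega))]
    have h1 : g b ≠ 0 := hg b hab (by omega)
    have he : g b / g a * (g (b+1) / g b) = g (b+1) * (g b / g b) / g a := by ring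
    rw [he, div_self h1, mul_one]

lemma jcs_colLen_strip (μ : YoungDiagram) (s t : ℕ) (h1 : μ.rowLen (s+1) ≤ t)
    (h2 : t < μ.rowLen s) : μ.colLen t = s + 1 := by
  have ha : s < μ.colLen t :=
    YoungDiagram.mem_iff_lt_colLen.mp (YoungDiagram.mem_iff_lt_rowLen.mpr h2)
  have hb : ¬ (s + 1 < μ.colLen t) := by
    intro hcon
    have := YoungDiagram.mem_iff_lt_rowLen.mp (YoungDiagram.mem_iff_lt_colLen.mpr hcon)
    omega
  omega

lemma jcs_step (α : ℝ) (hα : 0 < α) (μ : YoungDiagram) (i s : ℕ) (his : i ≤ s) :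
    ∏ t ∈ Ico (μ.rowLen (s+1)) (μ.rowLen s), jcsRowFac α μ i t
      = (jcsX α μ i - jcsX α μ s + 1) / (jcsX α μ i - jcsX α μ (s+1)) := by
  set G : ℕ → ℝ := fun q => jcsX α μ i - α * q + (s+1) with hG
  have hrs : μ.rowLen s ≤ μ.rowLen i := μ.rowLen_anti i s his
  have hGpos : ∀ q, q ≤ μ.rowLen s → 0 < G q := by
    intro q hq
    have hq' : (q : ℝ) ≤ (μ.rowLen i : ℝ) := by exact_mod_cast le_trans hq hrs
    have hsi : (i : ℝ) ≤ (s : ℝ) := by exact_mod_cast his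
    rw [hG]
    simp only [jcsX]
    nlinarith [mul_nonneg hα.le (sub_nonneg.mpr hq')]
  have hfac : ∀ t ∈ Ico (μ.rowLen (s+1)) (μ.rowLen s), jcsRowFac α μ i t = G (t+1) / G t := by
    intro t ht
    rw [Finset.mem_Ico] at ht
    have hcl : μ.colLen t = s + 1 := jcs_colLen_strip μ s t ht.1 ht.2
    unfold jcsRowFac jcsE
    rw [hcl, hG]
    congr 1 <;> push_cast <;> ring
  rw [Finset.prod_congr rfl hfac,
    jcs_teleratio G _ _ (μ.rowLen_anti s (s+1) (by omega))
      (fun t h1 h2 => (hGpos t h2).ne')]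
  have e1 : G (μ.rowLen s) = jcsX α μ i - jcsX α μ s + 1 := by
    rw [hG]; unfold jcsX; push_cast; ring
  have e2 : G (μ.rowLen (s+1)) = jcsX α μ i - jcsX α μ (s+1) := by
    rw [hG]; unfold jcsX; push_cast; ring
  rw [e1, e2]

lemma jcs_rowprod_aux (α : ℝ) (hα : 0 < α) (μ : YoungDiagram) (N : ℕ)
    (hN : μ.rowLen N = 0) (i : ℕ) :
    ∀ m s, s + m = N → i ≤ s →
    ∏ t ∈ range (μ.rowLen s), jcsRowFac α μ i t
      = ∏ q ∈ Ico s N, ((jcsX α μ i - jcsX α μ q + 1) / (jcsX α μ i - jcsX α μ (q+1))) := by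
  intro m
  induction m with
  | zero =>
    intro s hs _
    have : s = N := by omega
    subst this
    rw [hN]
    simp
  | succ k ih =>
    intro s hs hi
    have hsN : s < N := by omega
    rw [← Finset.prod_range_mul_prod_Ico (jcsRowFac α μ i) (μ.rowLen_anti s (s+1) (by omega)),
      ih (s+1) (by omega) (by omega), jcs_step α hα μ i s hi,
      Finset.prod_eq_prod_Ico_succ_bot hsN]
    ring

lemma jcs_rowprod (α : ℝ) (hα : 0 < α) (μ : YoungDiagram) (N : ℕ)
    (hN : μ.rowLen N = 0) (i : ℕ) (hiN : i ≤ N) :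
    ∏ t ∈ range (μ.rowLen i), jcsRowFac α μ i t
      = ∏ q ∈ Ico i N, ((jcsX α μ i - jcsX α μ q + 1) / (jcsX α μ i - jcsX α μ (q+1))) :=
  jcs_rowprod_aux α hα μ N hN i (N - i) i (by omega) le_rfl

lemma jcs_X_gap (α : ℝ) (hα : 0 < α) (μ : YoungDiagram) {s t : ℕ} (hst : s < t) :
    jcsX α μ t + 1 ≤ jcsX α μ s := by
  have h1 : (μ.rowLen t : ℝ) ≤ (μ.rowLen s : ℝ) := by
    exact_mod_cast μ.rowLen_anti s t hst.le
  have h2 : (s : ℝ) + 1 ≤ (t : ℝ) := by exact_mod_cast hst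
  unfold jcsX
  nlinarith [mul_nonneg hα.le (sub_nonneg.mpr h1)]

lemma jcs_X_ne (α : ℝ) (hα : 0 < α) (μ : YoungDiagram) {s t : ℕ} (hst : s ≠ t) :
    jcsX α μ s ≠ jcsX α μ t := by
  rcases Nat.lt_or_ge s t with h | h
  · have := jcs_X_gap α hα μ h; intro he; rw [he] at this; linarith
  · have hts : t < s := by omega
    have := jcs_X_gap α hα μ hts; intro he; rw [he] at this; linarith

lemma jcs_erase_split (i N : ℕ) (hiN : i ≤ N) (f : ℕ → ℝ) :
    ∏ t ∈ (range (N+1)).erase i, f t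
      = (∏ t ∈ range i, f t) * ∏ t ∈ Ico (i+1) (N+1), f t := by
  rw [← Finset.prod_union]
  · congr 1
    ext t
    simp only [Finset.mem_erase, Finset.mem_range, Finset.mem_union, Finset.mem_Ico]
    omega
  · rw [Finset.disjoint_left]
    intro t ht1 ht2
    simp only [Finset.mem_range] at ht1
    simp only [Finset.mem_Ico] at ht2
    omega

lemma jcs_Pform (α : ℝ) (hα : 0 < α) (μ : YoungDiagram) (N i : ℕ)
    (hN : μ.rowLen N = 0) (hiN : i ≤ N) :
    (∏ t ∈ range (μ.rowLen i), jcsRowFac α μ i t) * (∏ t ∈ range i, jcsColFac α μ i t)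
      = (∏ t ∈ range N, (jcsX α μ i - jcsX α μ t + 1))
        * ∏ t ∈ (range (N+1)).erase i, (jcsX α μ i - jcsX α μ t)⁻¹ := by
  rw [jcs_rowprod α hα μ N hN i hiN]
  unfold jcsColFac
  rw [Finset.prod_div_distrib, Finset.prod_div_distrib, div_mul_div_comm]
  have hnum : (∏ q ∈ Ico i N, (jcsX α μ i - jcsX α μ q + 1))
      * ∏ t ∈ range i, (jcsX α μ i - jcsX α μ t + 1)
      = ∏ t ∈ range N, (jcsX α μ i - jcsX α μ t + 1) := by
    rw [mul_comm]
    exact Finset.prod_range_mul_prod_Ico _ hiN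
  have hden : (∏ q ∈ Ico i N, (jcsX α μ i - jcsX α μ (q+1)))
      * ∏ t ∈ range i, (jcsX α μ i - jcsX α μ t)
      = ∏ t ∈ (range (N+1)).erase i, (jcsX α μ i - jcsX α μ t) := by
    rw [Finset.prod_Ico_add' (fun q => jcsX α μ i - jcsX α μ q) i N 1,
      jcs_erase_split i N hiN]
    ring
  rw [hnum, hden, div_eq_mul_inv, ← Finset.prod_inv_distrib]

lemma jcs_numzero (α : ℝ) (hα : 0 < α) (μ : YoungDiagram) (N i : ℕ)
    (hi : ¬ jcsAddable μ i) (hi0 : 0 < i) (hiN : i ≤ N) :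
    ∏ t ∈ range N, (jcsX α μ i - jcsX α μ t + 1) = 0 := by
  have hreq : μ.rowLen (i-1) = μ.rowLen i := by
    unfold jcsAddable at hi
    push_neg at hi
    have := μ.rowLen_anti (i-1) i (by omega)
    omega
  apply Finset.prod_eq_zero (Finset.mem_range.mpr (show i - 1 < N by omega))
  unfold jcsX
  rw [hreq]
  have : ((i - 1 : ℕ) : ℝ) = (i : ℝ) - 1 := by
    rw [Nat.cast_sub (by omega), Nat.cast_one]
  rw [this]
  ring

/-- For `α > 0`, a Young diagram `λ` with `n = |λ|` boxes and arbitrary `u, v ∈ ℂ`: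
`∑_{Λ : λ ↗ Λ} (c_α(b) + u)(c_α(b) + v) κ_α(λ,Λ) φ(Λ) = (nα + uv) φ(λ)`,
where `b = Λ ∖ λ` is the added box. -/
theorem jack_content_summation (α : ℝ) (hα : 0 < α) (lam : YoungDiagram)
    (n : ℕ) (hn : n = lam.card) (u v : ℂ) :
    (∑ᶠ Λ ∈ {Λ : YoungDiagram | YDCovers lam Λ},
      (∑ b ∈ Λ.cells \ lam.cells,
          ((alphaContent α b : ℂ) + u) * ((alphaContent α b : ℂ) + v)) *
        (jackMult α lam Λ : ℂ) * (phiJack α Λ : ℂ))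
      = ((n : ℂ) * (α : ℂ) + u * v) * (phiJack α lam : ℂ) := by
  classical
  set x : ℕ → ℂ := fun t => ((jcsX α lam t : ℝ) : ℂ) with hx
  have hNz : lam.rowLen (n+2) = 0 := jcs_rowLen_zero (by omega)
  have haddle : ∀ i, jcsAddable lam i → i < n+3 := by
    intro i hi
    have := jcs_addable_le_card hi
    omega
  set S : Finset ℕ := (Finset.range (n+3)).filter (jcsAddable lam) with hS
  have hset : {Λ : YoungDiagram | YDCovers lam Λ} = ↑(S.image (jcsGrow lam)) := by
    ext Λ
    simp only [Set.mem_setOf_eq, Finset.coe_image, Set.mem_image, Finset.mem_coe, hS,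
      Finset.mem_filter, Finset.mem_range]
    rw [jcs_covers_iff]
    constructor
    · rintro ⟨i, hi, rfl⟩
      exact ⟨i, ⟨haddle i hi, hi⟩, rfl⟩
    · rintro ⟨i, ⟨hiN, hi⟩, rfl⟩
      exact ⟨i, hi, rfl⟩
  rw [hset, finsum_mem_coe_finset, Finset.sum_image (fun i hi j hj he =>
    jcs_grow_inj (Finset.mem_filter.mp hi).2 (Finset.mem_filter.mp hj).2 he)]
  have hterm : ∀ i ∈ S,
      (∑ b ∈ (jcsGrow lam i).cells \ lam.cells,
          ((alphaContent α b : ℂ) + u) * ((alphaContent α b : ℂ) + v)) *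
        (jackMult α lam (jcsGrow lam i) : ℂ) * (phiJack α (jcsGrow lam i) : ℂ)
      = ((x i + u) * (x i + v) * ∏ t ∈ Finset.range (n+2), (x i - x t + 1)) *
          (∏ j ∈ (Finset.range (n+3)).erase i, (x i - x j)⁻¹) * (phiJack α lam : ℂ) := by
    intro i hi
    obtain ⟨hiN, hadd⟩ := Finset.mem_filter.mp hi
    rw [Finset.mem_range] at hiN
    have hreal : jackMult α lam (jcsGrow lam i) * phiJack α (jcsGrow lam i)
        = (phiJack α lam * ∏ t ∈ Finset.range (n+2), (jcsX α lam i - jcsX α lam t + 1))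
          * ∏ t ∈ (Finset.range (n+3)).erase i, (jcsX α lam i - jcsX α lam t)⁻¹ := by
      have hp := jcs_Pform α hα lam (n+2) i hNz (by omega)
      rw [jcs_jack_phi α hα lam i hadd, mul_assoc, hp]
      ring
    rw [jcs_diff hadd, Finset.sum_singleton]
    have hcont : ((alphaContent α (i, lam.rowLen i) : ℝ) : ℂ) = x i := rfl
    rw [hcont, mul_assoc, show (jackMult α lam (jcsGrow lam i) : ℂ)
        * (phiJack α (jcsGrow lam i) : ℂ)
        = ((jackMult α lam (jcsGrow lam i) * phiJack α (jcsGrow lam i) : ℝ) : ℂ) by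
          push_cast; ring,
      hreal]
    simp only [hx]
    push_cast
    ring
  rw [Finset.sum_congr rfl hterm]
  have hvan : ∀ i ∈ Finset.range (n+3), i ∉ S →
      ((x i + u) * (x i + v) * ∏ t ∈ Finset.range (n+2), (x i - x t + 1)) *
        (∏ j ∈ (Finset.range (n+3)).erase i, (x i - x j)⁻¹) * (phiJack α lam : ℂ) = 0 := by
    intro i hiR hiS
    have hnadd : ¬ jcsAddable lam i := by
      intro hc; exact hiS (Finset.mem_filter.mpr ⟨hiR, hc⟩)
    have hi0 : 0 < i := by
      rcases Nat.eq_zero_or_pos i with h0 | h0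
      · exact absurd (Or.inl h0) hnadd
      · exact h0
    rw [Finset.mem_range] at hiR
    have hz := jcs_numzero α hα lam (n+2) i hnadd hi0 (by omega)
    have hzc : ∏ t ∈ Finset.range (n+2), (x i - x t + 1) = 0 := by
      simp only [hx]
      have hcast : ∏ t ∈ Finset.range (n+2),
          (((jcsX α lam i : ℝ) : ℂ) - ((jcsX α lam t : ℝ) : ℂ) + 1)
          = (((∏ t ∈ Finset.range (n+2), (jcsX α lam i - jcsX α lam t + 1)) : ℝ) : ℂ) := by
        push_cast
        rfl
      rw [hcast, hz]
      norm_num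
    rw [hzc]
    ring
  rw [Finset.sum_subset (by rw [hS]; exact Finset.filter_subset _ _) hvan, ← Finset.sum_mul]
  have hdist : ∀ i ∈ Finset.range (n+3), ∀ j ∈ Finset.range (n+3), i ≠ j → x i ≠ x j := by
    intro i _ j _ hij
    simp only [hx]
    intro he
    exact jcs_X_ne α hα lam hij (by exact_mod_cast he)
  rw [jcs_keyAlgebra n x u v hdist]
  have hcolle : lam.colLen 0 ≤ n + 2 := by
    have := jcs_colLen_le_card lam 0
    omega
  have hcard : (n : ℂ) = ∑ t ∈ Finset.range (n+2), (lam.rowLen t : ℂ) := by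
    have h1 : n = ∑ t ∈ Finset.range (n+2), lam.rowLen t := hn.trans (jcs_card_eq_sum hcolle)
    exact_mod_cast h1
  have hxval : ∀ t, x t = (α : ℂ) * (lam.rowLen t : ℂ) - (t : ℂ) := by
    intro t
    simp only [hx, jcsX]
    push_cast
    ring
  rw [jcs_rhsValue n n (α : ℂ) lam.rowLen hNz hcard u v x hxval]
end

section
/- Let α > 0. For every Young diagram λ, ∑_{Λ : λ ↗ Λ} κ_α(λ,Λ) · φ(Λ) = φ(λ), where the sum runs over all Young diagrams Λ obtained from λ by adding one box. Hence the numbers p_α(λ,Λ) = κ_α(λ,Λ) φ(Λ)/φ(λ) are nonnegative and sum to 1 over Λ with λ ↗ Λ, i.e. they form a system of transition probabilities on the Young lattice. -/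
set_option maxHeartbeats 1000000

open Finset Polynomial


theorem lagrange_sum {s t : Finset ℕ} (v w : ℕ → ℝ) (hinj : Set.InjOn v ↑s)
    (hcard : t.card + 1 = s.card) :
    ∑ r ∈ s, (∏ y ∈ t, (v r - w y)) * ∏ x ∈ s.erase r, (v r - v x)⁻¹ = 1 := by
  classical
  set f : Polynomial ℝ := Lagrange.nodal t w with hf
  have hdegnat : f.natDegree = t.card := Lagrange.natDegree_nodal
  have hdeg : f.degree < (s.card : WithBot ℕ) := by
    rw [hf, Lagrange.degree_nodal]
    exact_mod_cast (by omega : t.card < s.card)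
  have hint := (Lagrange.eq_interpolate hinj hdeg).symm
  have hco := congrArg (fun p => Polynomial.coeff p t.card) hint
  simp only [Lagrange.interpolate_apply] at hco
  rw [finset_sum_coeff] at hco
  have hmon : f.Monic := Lagrange.nodal_monic
  have hcof : f.coeff t.card = 1 := by
    have := hmon.coeff_natDegree
    rwa [hdegnat] at this
  rw [hcof] at hco
  rw [← hco]
  refine Finset.sum_congr rfl fun r hr => ?_
  have hbasis : Lagrange.basis s v r = Polynomial.C (Lagrange.nodalWeight s v r)
      * Lagrange.nodal (s.erase r) v := by
    rw [Lagrange.basis_eq_prod_sub_inv_mul_nodal_div hr, Lagrange.nodal_erase_eq_nodal_div hr]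
  have hcarderase : (s.erase r).card = t.card := by
    rw [Finset.card_erase_of_mem hr]; omega
  have hnc : (Lagrange.nodal (s.erase r) v).coeff t.card = 1 := by
    have hm : (Lagrange.nodal (s.erase r) v).Monic := Lagrange.nodal_monic
    have hd : (Lagrange.nodal (s.erase r) v).natDegree = t.card := by
      rw [Lagrange.natDegree_nodal, hcarderase]
    have := hm.coeff_natDegree
    rwa [hd] at this
  rw [hbasis]
  simp only [Polynomial.coeff_C_mul, hnc, mul_one, hf, Lagrange.eval_nodal,
    Lagrange.nodalWeight, Finset.prod_inv_distrib]

section JK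
variable (lam : YoungDiagram)

/-- row `r` can receive a new box -/
def JkAddable (r : ℕ) : Prop := r = 0 ∨ lam.rowLen r < lam.rowLen (r-1)

instance : DecidablePred (JkAddable lam) := fun _ => inferInstanceAs (Decidable (_ ∨ _))

variable {lam}

lemma jk_key (i j : ℕ) : i < lam.colLen j ↔ j < lam.rowLen i :=
  YoungDiagram.mem_iff_lt_colLen.symm.trans YoungDiagram.mem_iff_lt_rowLen

lemma jk_rowLen_eq {μ : YoungDiagram} {i n : ℕ} (h : ∀ j, (i, j) ∈ μ ↔ j < n) :
    μ.rowLen i = n := by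
  have h1 := (YoungDiagram.mem_iff_lt_rowLen).symm.trans (h (μ.rowLen i))
  have h2 := (YoungDiagram.mem_iff_lt_rowLen).symm.trans (h n)
  omega

lemma jk_colLen_eq {μ : YoungDiagram} {j n : ℕ} (h : ∀ i, (i, j) ∈ μ ↔ i < n) :
    μ.colLen j = n := by
  have h1 := (YoungDiagram.mem_iff_lt_colLen).symm.trans (h (μ.colLen j))
  have h2 := (YoungDiagram.mem_iff_lt_colLen).symm.trans (h n)
  omega

lemma jk_fl : lam.rowLen (lam.colLen 0) = 0 := by
  have := jk_key (lam := lam) (lam.colLen 0) 0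
  omega

lemma jk_gf {r : ℕ} (hr : JkAddable lam r) : lam.colLen (lam.rowLen r) = r := by
  apply jk_colLen_eq
  intro i
  rw [YoungDiagram.mem_iff_lt_rowLen]
  constructor
  · intro h
    by_contra hc
    exact absurd (lam.rowLen_anti r i (by omega)) (by omega)
  · intro h
    rcases hr with h0 | hlt
    · omega
    · have := lam.rowLen_anti i (r-1) (by omega)
      omega

lemma jk_le {r : ℕ} (hr : JkAddable lam r) : r ≤ lam.colLen 0 := by
  rcases hr with h0 | hlt
  · omega
  · have : r - 1 < lam.colLen 0 := by
      rw [jk_key]; omega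
    omega

variable (lam) in
/-- add a box at the end of row `r` -/
def jkGrow (r : ℕ) : YoungDiagram :=
  if hr : JkAddable lam r then
    { cells := insert (r, lam.rowLen r) lam.cells
      isLowerSet := by
        rw [Finset.coe_insert]
        intro a b hba ha
        rcases ha with rfl | ha
        · obtain ⟨i, j⟩ := b
          obtain ⟨h1, h2⟩ := Prod.mk_le_mk.mp hba
          rcases eq_or_lt_of_le h2 with rfl | hj
          · rcases eq_or_lt_of_le h1 with rfl | hi
            · exact Or.inl rfl
            · refine Or.inr ?_
              rw [Finset.mem_coe, YoungDiagram.mem_cells, YoungDiagram.mem_iff_lt_rowLen]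
              rcases hr with h0 | hlt
              · omega
              · have := lam.rowLen_anti i (r-1) (by omega)
                omega
          · refine Or.inr ?_
            rw [Finset.mem_coe, YoungDiagram.mem_cells, YoungDiagram.mem_iff_lt_rowLen]
            rcases eq_or_lt_of_le h1 with rfl | hi
            · exact hj
            · rcases hr with h0 | hlt
              · omega
              · have := lam.rowLen_anti i (r-1) (by omega)
                omega
        · exact Or.inr (lam.isLowerSet hba ha) }
  else ⊥

lemma jk_corner_not_mem (r : ℕ) : (r, lam.rowLen r) ∉ lam.cells := by
  rw [YoungDiagram.mem_cells, YoungDiagram.mem_iff_lt_rowLen]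
  omega

lemma jkGrow_cells {r : ℕ} (hr : JkAddable lam r) :
    (jkGrow lam r).cells = insert (r, lam.rowLen r) lam.cells := by
  rw [jkGrow, dif_pos hr]

lemma jkGrow_mem {r : ℕ} (hr : JkAddable lam r) {x : ℕ × ℕ} :
    x ∈ jkGrow lam r ↔ x = (r, lam.rowLen r) ∨ x ∈ lam := by
  rw [← YoungDiagram.mem_cells, jkGrow_cells hr, Finset.mem_insert, YoungDiagram.mem_cells]

lemma jkGrow_rowLen {r : ℕ} (hr : JkAddable lam r) (i : ℕ) :
    (jkGrow lam r).rowLen i = lam.rowLen i + (if i = r then 1 else 0) := by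
  apply jk_rowLen_eq
  intro j
  rw [jkGrow_mem hr, YoungDiagram.mem_iff_lt_rowLen, Prod.mk.injEq]
  by_cases hi : i = r <;> simp [hi] <;> omega

lemma jkGrow_colLen {r : ℕ} (hr : JkAddable lam r) (j : ℕ) :
    (jkGrow lam r).colLen j = lam.colLen j + (if j = lam.rowLen r then 1 else 0) := by
  apply jk_colLen_eq
  intro i
  rw [jkGrow_mem hr, YoungDiagram.mem_iff_lt_colLen, Prod.mk.injEq]
  by_cases hj : j = lam.rowLen r
  · subst hj
    rw [jk_gf hr, if_pos rfl]
    omega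
  · simp only [hj, if_false, and_false, false_or, add_zero]

lemma jk_covers_iff {Λ : YoungDiagram} :
    YDCovers lam Λ ↔ ∃ r, JkAddable lam r ∧ Λ = jkGrow lam r := by
  constructor
  · rintro ⟨⟨i, j⟩, hc, hcells⟩
    have hmem : (i, j) ∈ Λ := by
      rw [← YoungDiagram.mem_cells, hcells]; exact Finset.mem_insert_self _ _
    have hge : lam.rowLen i ≤ j := by
      by_contra h
      exact hc (by rw [YoungDiagram.mem_cells, YoungDiagram.mem_iff_lt_rowLen]; omega)
    have hle : j ≤ lam.rowLen i := by
      by_contra h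
      have h2 : (i, lam.rowLen i) ∈ Λ :=
        Λ.up_left_mem (le_refl i) (by omega) hmem
      rw [← YoungDiagram.mem_cells, hcells, Finset.mem_insert] at h2
      rcases h2 with h2 | h2
      · rw [Prod.mk.injEq] at h2; omega
      · exact absurd h2 (jk_corner_not_mem i)
    have hj : j = lam.rowLen i := le_antisymm hle hge
    subst hj
    have haddable : JkAddable lam i := by
      rcases Nat.eq_zero_or_pos i with rfl | hi
      · exact Or.inl rfl
      · refine Or.inr ?_
        have h2 : (i - 1, lam.rowLen i) ∈ Λ :=
          Λ.up_left_mem (by omega) (le_refl _) hmem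
        rw [← YoungDiagram.mem_cells, hcells, Finset.mem_insert] at h2
        rcases h2 with h2 | h2
        · rw [Prod.mk.injEq] at h2; omega
        · rw [YoungDiagram.mem_cells, YoungDiagram.mem_iff_lt_rowLen] at h2
          omega
    refine ⟨i, haddable, ?_⟩
    ext1
    rw [hcells, jkGrow_cells haddable]
  · rintro ⟨r, hr, rfl⟩
    exact ⟨(r, lam.rowLen r), jk_corner_not_mem r, jkGrow_cells hr⟩

end JK


section JK2
variable {lam : YoungDiagram}

noncomputable def jkZ (α : ℝ) (lam : YoungDiagram) (i : ℕ) : ℝ := (lam.rowLen i : ℝ) * α - i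
noncomputable def jkT (α : ℝ) (lam : YoungDiagram) (j : ℕ) : ℝ := (j : ℝ) * α - lam.colLen j

noncomputable def jkF (α : ℝ) (μ : YoungDiagram) (b : ℕ × ℕ) : ℝ :=
  ((armLen μ b : ℝ) * α + (legLen μ b : ℝ) + 1)⁻¹

noncomputable def jkK (α : ℝ) (μ : YoungDiagram) (b : ℕ × ℕ) : ℝ :=
  (((armLen μ b : ℝ) * α + (legLen μ b : ℝ) + 2) *
      (((armLen μ b : ℝ) + 1) * α + (legLen μ b : ℝ))) /
    ((((armLen μ b : ℝ) + 1) * α + (legLen μ b : ℝ) + 1) *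
      ((armLen μ b : ℝ) * α + (legLen μ b : ℝ) + 1))

noncomputable def jkP (α : ℝ) (lam : YoungDiagram) (r : ℕ) : ℝ :=
  (∏ j ∈ range (lam.rowLen r), (jkZ α lam r - jkT α lam j - α) / (jkZ α lam r - jkT α lam j)) *
  ∏ i ∈ range r, (jkZ α lam i - jkZ α lam r - 1) / (jkZ α lam i - jkZ α lam r)

lemma jk_row_filter (lam : YoungDiagram) (r : ℕ) :
    lam.cells.filter (fun b => b.1 = r) = (range (lam.rowLen r)).image (fun j => (r, j)) := by
  ext ⟨i, j⟩
  simp only [Finset.mem_filter, Finset.mem_image, Finset.mem_range, YoungDiagram.mem_cells]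
  constructor
  · rintro ⟨hb, rfl⟩
    exact ⟨j, YoungDiagram.mem_iff_lt_rowLen.mp hb, rfl⟩
  · rintro ⟨j', hj', h⟩
    rw [Prod.mk.injEq] at h
    obtain ⟨rfl, rfl⟩ := h
    exact ⟨YoungDiagram.mem_iff_lt_rowLen.mpr hj', rfl⟩

lemma jk_col_filter {r : ℕ} (hr : JkAddable lam r) :
    lam.cells.filter (fun b => b.2 = lam.rowLen r)
      = (range r).image (fun i => (i, lam.rowLen r)) := by
  ext ⟨i, j⟩
  simp only [Finset.mem_filter, Finset.mem_image, Finset.mem_range, YoungDiagram.mem_cells]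
  constructor
  · rintro ⟨hb, rfl⟩
    refine ⟨i, ?_, rfl⟩
    have := YoungDiagram.mem_iff_lt_colLen.mp hb
    rw [jk_gf hr] at this
    exact this
  · rintro ⟨i', hi', h⟩
    rw [Prod.mk.injEq] at h
    obtain ⟨rfl, rfl⟩ := h
    refine ⟨YoungDiagram.mem_iff_lt_colLen.mpr ?_, rfl⟩
    rw [jk_gf hr]
    exact hi'

lemma jk_rowrat {α : ℝ} (hα : 0 < α) (A L : ℝ) (hA : 0 ≤ A) (hL : 0 ≤ L) :
    ((A + 1) * α + L + 1)⁻¹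
      = (A * α + L + 1)⁻¹ * ((A * α + L + 1) / ((A + 1) * α + L + 1)) := by
  have h1 : 0 < A * α + L + 1 := by nlinarith
  have h3 : 0 < (A + 1) * α + L + 1 := by nlinarith
  field_simp

lemma jk_colrat {α : ℝ} (hα : 0 < α) (A L : ℝ) (hA : 0 ≤ A) (hL : 0 ≤ L) :
    (A * α + L + 2) * ((A + 1) * α + L) / (((A + 1) * α + L + 1) * (A * α + L + 1))
        * (A * α + (L + 1) + 1)⁻¹
      = (A * α + L + 1)⁻¹ * (((A + 1) * α + L) / ((A + 1) * α + L + 1)) := by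
  have h1 : 0 < A * α + L + 1 := by nlinarith
  have h2 : 0 < A * α + (L + 1) + 1 := by nlinarith
  have h3 : 0 < (A + 1) * α + L + 1 := by nlinarith
  field_simp
  ring

lemma jk_step2 (α : ℝ) (hα : 0 < α) {r : ℕ} (hr : JkAddable lam r) :
    jackMult α lam (jkGrow lam r) * phiJack α (jkGrow lam r) = jkP α lam r * phiJack α lam := by
  have hsd : (jkGrow lam r).cells \ lam.cells = {(r, lam.rowLen r)} := by
    rw [jkGrow_cells hr]
    ext b
    simp only [Finset.mem_sdiff, Finset.mem_insert, Finset.mem_singleton]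
    constructor
    · rintro ⟨h | h, h2⟩
      · exact h
      · exact absurd h h2
    · rintro rfl
      exact ⟨Or.inl rfl, jk_corner_not_mem r⟩
  have hjm : jackMult α lam (jkGrow lam r)
      = ∏ b ∈ lam.cells.filter (fun b => b.2 = lam.rowLen r), jkK α lam b := by
    rw [jackMult, hsd, Finset.prod_singleton]
    simp only [jkK]
  have hcorner1 : armLen (jkGrow lam r) (r, lam.rowLen r) = 0 := by
    rw [armLen, jkGrow_rowLen hr]
    simp only [eq_self_iff_true, if_true]
    omega
  have hcorner2 : legLen (jkGrow lam r) (r, lam.rowLen r) = 0 := by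
    rw [legLen, jkGrow_colLen hr]
    simp only [eq_self_iff_true, if_true, jk_gf hr]
    omega
  have hphiν : phiJack α (jkGrow lam r) = ∏ b ∈ lam.cells, jkF α (jkGrow lam r) b := by
    rw [show phiJack α (jkGrow lam r) = ∏ b ∈ (jkGrow lam r).cells, jkF α (jkGrow lam r) b
        from rfl]
    rw [jkGrow_cells hr, Finset.prod_insert (jk_corner_not_mem r), jkF, hcorner1, hcorner2]
    norm_num
  have hphil : phiJack α lam = ∏ b ∈ lam.cells, jkF α lam b := rfl
  have hcol_ne_row : ∀ b : ℕ × ℕ, b ∈ lam.cells → b.2 = lam.rowLen r → ¬ b.1 = r := by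
    intro b hb h2
    have hmem : b.1 < lam.colLen b.2 := by
      rw [← YoungDiagram.mem_iff_lt_colLen (i := b.1) (j := b.2)]
      rw [YoungDiagram.mem_cells] at hb
      exact hb
    rw [h2, jk_gf hr] at hmem
    omega
  have hsplit : ∀ F : ℕ × ℕ → ℝ, ∏ b ∈ lam.cells, F b
      = (∏ b ∈ lam.cells.filter (fun b => b.1 = r), F b) *
        ((∏ b ∈ lam.cells.filter (fun b => b.2 = lam.rowLen r), F b) *
          ∏ b ∈ (lam.cells.filter (fun b => ¬ b.1 = r)).filter (fun b => ¬ b.2 = lam.rowLen r),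
            F b) := by
    intro F
    rw [← Finset.prod_filter_mul_prod_filter_not lam.cells (fun b => b.1 = r) F]
    congr 1
    rw [← Finset.prod_filter_mul_prod_filter_not
      (lam.cells.filter (fun b => ¬ b.1 = r)) (fun b => b.2 = lam.rowLen r) F]
    congr 2
    ext b
    simp only [Finset.mem_filter, and_assoc]
    constructor
    · rintro ⟨h1, _, h3⟩
      exact ⟨h1, h3⟩
    · rintro ⟨h1, h2⟩
      exact ⟨h1, hcol_ne_row b h1 h2, h2⟩
  have hrest : ∏ b ∈ (lam.cells.filter (fun b => ¬ b.1 = r)).filter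
        (fun b => ¬ b.2 = lam.rowLen r), jkF α (jkGrow lam r) b
      = ∏ b ∈ (lam.cells.filter (fun b => ¬ b.1 = r)).filter
        (fun b => ¬ b.2 = lam.rowLen r), jkF α lam b := by
    refine Finset.prod_congr rfl fun b hb => ?_
    simp only [Finset.mem_filter] at hb
    obtain ⟨⟨_, h1⟩, h2⟩ := hb
    have ha : armLen (jkGrow lam r) b = armLen lam b := by
      rw [armLen, armLen, jkGrow_rowLen hr, if_neg h1, add_zero]
    have hl : legLen (jkGrow lam r) b = legLen lam b := by
      rw [legLen, legLen, jkGrow_colLen hr, if_neg h2, add_zero]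
    rw [jkF, jkF, ha, hl]
  have hrow : ∏ b ∈ lam.cells.filter (fun b => b.1 = r), jkF α (jkGrow lam r) b
      = (∏ b ∈ lam.cells.filter (fun b => b.1 = r), jkF α lam b) *
        ∏ j ∈ range (lam.rowLen r),
          (jkZ α lam r - jkT α lam j - α) / (jkZ α lam r - jkT α lam j) := by
    rw [jk_row_filter lam r]
    rw [Finset.prod_image (fun a _ b _ h => by simpa using h),
        Finset.prod_image (fun a _ b _ h => by simpa using h)]
    rw [← Finset.prod_mul_distrib]
    refine Finset.prod_congr rfl fun j hj => ?_
    rw [Finset.mem_range] at hj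
    have hgj : r < lam.colLen j := (jk_key r j).mpr hj
    have ha1 : armLen lam (r, j) = lam.rowLen r - j - 1 := rfl
    have hl1 : legLen lam (r, j) = lam.colLen j - r - 1 := rfl
    have ha2 : armLen (jkGrow lam r) (r, j) = lam.rowLen r - j := by
      rw [armLen, jkGrow_rowLen hr]
      simp only [eq_self_iff_true, if_true]
      omega
    have hl2 : legLen (jkGrow lam r) (r, j) = lam.colLen j - r - 1 := by
      rw [legLen, jkGrow_colLen hr]
      simp only [if_neg (by omega : ¬ j = lam.rowLen r), add_zero]
    have hA : ((lam.rowLen r - j - 1 : ℕ) : ℝ) = (lam.rowLen r : ℝ) - (j : ℝ) - 1 := by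
      rw [Nat.sub_sub, Nat.cast_sub (by omega)]
      push_cast
      ring
    have hL : ((lam.colLen j - r - 1 : ℕ) : ℝ) = (lam.colLen j : ℝ) - (r : ℝ) - 1 := by
      rw [Nat.sub_sub, Nat.cast_sub (by omega)]
      push_cast
      ring
    have e1 : ((lam.rowLen r - j : ℕ) : ℝ) = ((lam.rowLen r - j - 1 : ℕ) : ℝ) + 1 := by
      rw [hA, Nat.cast_sub (by omega : j ≤ lam.rowLen r)]
      ring
    have e2 : jkZ α lam r - jkT α lam j - α
        = ((lam.rowLen r - j - 1 : ℕ) : ℝ) * α + ((lam.colLen j - r - 1 : ℕ) : ℝ) + 1 := by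
      simp only [jkZ, jkT]
      rw [hA, hL]
      ring
    have e3 : jkZ α lam r - jkT α lam j
        = (((lam.rowLen r - j - 1 : ℕ) : ℝ) + 1) * α + ((lam.colLen j - r - 1 : ℕ) : ℝ) + 1 := by
      simp only [jkZ, jkT]
      rw [hA, hL]
      ring
    rw [jkF, jkF, ha1, hl1, ha2, hl2, e1, e2, e3]
    exact jk_rowrat hα _ _ (Nat.cast_nonneg _) (Nat.cast_nonneg _)
  have hcol_ne_row : ∀ b : ℕ × ℕ, b ∈ lam.cells → b.2 = lam.rowLen r → ¬ b.1 = r := by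
    intro b hb h2
    have hmem : b.1 < lam.colLen b.2 := by
      rw [← YoungDiagram.mem_iff_lt_colLen (i := b.1) (j := b.2)]
      rw [YoungDiagram.mem_cells] at hb
      exact hb
    rw [h2, jk_gf hr] at hmem
    omega
  have hsplit : ∀ F : ℕ × ℕ → ℝ, ∏ b ∈ lam.cells, F b
      = (∏ b ∈ lam.cells.filter (fun b => b.1 = r), F b) *
        ((∏ b ∈ lam.cells.filter (fun b => b.2 = lam.rowLen r), F b) *
          ∏ b ∈ (lam.cells.filter (fun b => ¬ b.1 = r)).filter (fun b => ¬ b.2 = lam.rowLen r),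
            F b) := by
    intro F
    rw [← Finset.prod_filter_mul_prod_filter_not lam.cells (fun b => b.1 = r) F]
    congr 1
    rw [← Finset.prod_filter_mul_prod_filter_not
      (lam.cells.filter (fun b => ¬ b.1 = r)) (fun b => b.2 = lam.rowLen r) F]
    congr 2
    ext b
    simp only [Finset.mem_filter, and_assoc]
    constructor
    · rintro ⟨h1, _, h3⟩
      exact ⟨h1, h3⟩
    · rintro ⟨h1, h2⟩
      exact ⟨h1, hcol_ne_row b h1 h2, h2⟩
  have hrest : ∏ b ∈ (lam.cells.filter (fun b => ¬ b.1 = r)).filter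
        (fun b => ¬ b.2 = lam.rowLen r), jkF α (jkGrow lam r) b
      = ∏ b ∈ (lam.cells.filter (fun b => ¬ b.1 = r)).filter
        (fun b => ¬ b.2 = lam.rowLen r), jkF α lam b := by
    refine Finset.prod_congr rfl fun b hb => ?_
    simp only [Finset.mem_filter] at hb
    obtain ⟨⟨_, h1⟩, h2⟩ := hb
    have ha : armLen (jkGrow lam r) b = armLen lam b := by
      rw [armLen, armLen, jkGrow_rowLen hr, if_neg h1, add_zero]
    have hl : legLen (jkGrow lam r) b = legLen lam b := by
      rw [legLen, legLen, jkGrow_colLen hr, if_neg h2, add_zero]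
    rw [jkF, jkF, ha, hl]
  have hrow : ∏ b ∈ lam.cells.filter (fun b => b.1 = r), jkF α (jkGrow lam r) b
      = (∏ b ∈ lam.cells.filter (fun b => b.1 = r), jkF α lam b) *
        ∏ j ∈ range (lam.rowLen r),
          (jkZ α lam r - jkT α lam j - α) / (jkZ α lam r - jkT α lam j) := by
    rw [jk_row_filter lam r]
    rw [Finset.prod_image (fun a _ b _ h => by simpa using h),
        Finset.prod_image (fun a _ b _ h => by simpa using h)]
    rw [← Finset.prod_mul_distrib]
    refine Finset.prod_congr rfl fun j hj => ?_
    rw [Finset.mem_range] at hj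
    have hgj : r < lam.colLen j := (jk_key r j).mpr hj
    have ha1 : armLen lam (r, j) = lam.rowLen r - j - 1 := rfl
    have hl1 : legLen lam (r, j) = lam.colLen j - r - 1 := rfl
    have ha2 : armLen (jkGrow lam r) (r, j) = lam.rowLen r - j := by
      rw [armLen, jkGrow_rowLen hr]
      simp only [eq_self_iff_true, if_true]
      omega
    have hl2 : legLen (jkGrow lam r) (r, j) = lam.colLen j - r - 1 := by
      rw [legLen, jkGrow_colLen hr]
      simp only [if_neg (by omega : ¬ j = lam.rowLen r), add_zero]
    rw [jkF, jkF, ha1, hl1, ha2, hl2, jkZ, jkT]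
    rw [Nat.sub_sub, Nat.sub_sub, Nat.cast_sub (by omega : j + 1 ≤ lam.rowLen r),
        Nat.cast_sub (by omega : r + 1 ≤ lam.colLen j), Nat.cast_sub (by omega : j ≤ lam.rowLen r)]
    push_cast
    have hC : (j : ℝ) + 1 ≤ (lam.rowLen r : ℝ) := by exact_mod_cast hj
    have hG : (r : ℝ) + 1 ≤ (lam.colLen j : ℝ) := by exact_mod_cast hgj
    have hax : (0:ℝ) ≤ ((lam.rowLen r : ℝ) - ((j:ℝ) + 1)) * α :=
      mul_nonneg (by linarith) hα.le
    have hax2 : (0:ℝ) ≤ ((lam.rowLen r : ℝ) - (j:ℝ)) * α :=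
      mul_nonneg (by linarith) hα.le
    have d1 : 0 < ((lam.rowLen r : ℝ) - ((j:ℝ) + 1)) * α + ((lam.colLen j : ℝ) - ((r:ℝ) + 1)) + 1 := by
      nlinarith
    have d2 : 0 < ((lam.rowLen r : ℝ) - (j:ℝ)) * α + ((lam.colLen j : ℝ) - ((r:ℝ) + 1)) + 1 := by
      nlinarith
    have d3 : 0 < (lam.rowLen r : ℝ) * α - (r:ℝ) - ((j:ℝ) * α - (lam.colLen j : ℝ)) := by
      nlinarith
    rw [show (lam.rowLen r : ℝ) * α - (r:ℝ) - ((j:ℝ) * α - (lam.colLen j : ℝ)) - α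
          = ((lam.rowLen r : ℝ) - ((j:ℝ) + 1)) * α + ((lam.colLen j : ℝ) - ((r:ℝ) + 1)) + 1 by ring,
        show (lam.rowLen r : ℝ) * α - (r:ℝ) - ((j:ℝ) * α - (lam.colLen j : ℝ))
          = ((lam.rowLen r : ℝ) - (j:ℝ)) * α + ((lam.colLen j : ℝ) - ((r:ℝ) + 1)) + 1 by ring,
        ← mul_div_assoc, inv_mul_cancel₀ d1.ne', one_div]
  have hcol : ∏ b ∈ lam.cells.filter (fun b => b.2 = lam.rowLen r),
        (jkK α lam b * jkF α (jkGrow lam r) b)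
      = (∏ b ∈ lam.cells.filter (fun b => b.2 = lam.rowLen r), jkF α lam b) *
        ∏ i ∈ range r,
          (jkZ α lam i - jkZ α lam r - 1) / (jkZ α lam i - jkZ α lam r) := by
    rw [jk_col_filter hr]
    rw [Finset.prod_image (fun a _ b _ h => by simpa using h),
        Finset.prod_image (fun a _ b _ h => by simpa using h)]
    rw [← Finset.prod_mul_distrib]
    refine Finset.prod_congr rfl fun i hi => ?_
    rw [Finset.mem_range] at hi
    have hfi : lam.rowLen r < lam.rowLen i := by
      have := (jk_key i (lam.rowLen r)).mp (by rw [jk_gf hr]; omega)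
      omega
    have ha1 : armLen lam (i, lam.rowLen r) = lam.rowLen i - lam.rowLen r - 1 := rfl
    have hl1 : legLen lam (i, lam.rowLen r) = r - i - 1 := by
      rw [legLen, jk_gf hr]
    have ha2 : armLen (jkGrow lam r) (i, lam.rowLen r) = lam.rowLen i - lam.rowLen r - 1 := by
      rw [armLen, jkGrow_rowLen hr]
      simp only [if_neg (by omega : ¬ i = r), add_zero]
    have hl2 : legLen (jkGrow lam r) (i, lam.rowLen r) = r - i := by
      rw [legLen, jkGrow_colLen hr]
      simp only [eq_self_iff_true, if_true, jk_gf hr]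
      omega
    have hA : ((lam.rowLen i - lam.rowLen r - 1 : ℕ) : ℝ)
        = (lam.rowLen i : ℝ) - (lam.rowLen r : ℝ) - 1 := by
      rw [Nat.sub_sub, Nat.cast_sub (by omega)]
      push_cast
      ring
    have hL : ((r - i - 1 : ℕ) : ℝ) = (r : ℝ) - (i : ℝ) - 1 := by
      rw [Nat.sub_sub, Nat.cast_sub (by omega)]
      push_cast
      ring
    have e1 : ((r - i : ℕ) : ℝ) = ((r - i - 1 : ℕ) : ℝ) + 1 := by
      rw [hL, Nat.cast_sub (by omega : i ≤ r)]
      ring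
    have e2 : jkZ α lam i - jkZ α lam r - 1
        = (((lam.rowLen i - lam.rowLen r - 1 : ℕ) : ℝ) + 1) * α + ((r - i - 1 : ℕ) : ℝ) := by
      simp only [jkZ]
      rw [hA, hL]
      ring
    have e3 : jkZ α lam i - jkZ α lam r
        = (((lam.rowLen i - lam.rowLen r - 1 : ℕ) : ℝ) + 1) * α + ((r - i - 1 : ℕ) : ℝ) + 1 := by
      simp only [jkZ]
      rw [hA, hL]
      ring
    rw [jkK, jkF, jkF, ha1, hl1, ha2, hl2, e1, e2, e3]
    exact jk_colrat hα _ _ (Nat.cast_nonneg _) (Nat.cast_nonneg _)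
  calc jackMult α lam (jkGrow lam r) * phiJack α (jkGrow lam r)
      = (∏ b ∈ lam.cells.filter (fun b => b.2 = lam.rowLen r), jkK α lam b) *
        ((∏ b ∈ lam.cells.filter (fun b => b.1 = r), jkF α (jkGrow lam r) b) *
         ((∏ b ∈ lam.cells.filter (fun b => b.2 = lam.rowLen r), jkF α (jkGrow lam r) b) *
          ∏ b ∈ (lam.cells.filter (fun b => ¬ b.1 = r)).filter
            (fun b => ¬ b.2 = lam.rowLen r), jkF α (jkGrow lam r) b)) := by
        rw [hjm, hphiν, hsplit]
    _ = (∏ b ∈ lam.cells.filter (fun b => b.1 = r), jkF α (jkGrow lam r) b) *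
        ((∏ b ∈ lam.cells.filter (fun b => b.2 = lam.rowLen r),
            (jkK α lam b * jkF α (jkGrow lam r) b)) *
          ∏ b ∈ (lam.cells.filter (fun b => ¬ b.1 = r)).filter
            (fun b => ¬ b.2 = lam.rowLen r), jkF α (jkGrow lam r) b) := by
        rw [Finset.prod_mul_distrib]
        ring
    _ = jkP α lam r * phiJack α lam := by
        rw [hrow, hcol, hrest]
        simp only [jkP]
        rw [hphil, hsplit (jkF α lam)]
        ring

end JK2



section JK3
variable {lam : YoungDiagram}

/-- addable rows -/
def jkS (lam : YoungDiagram) : Finset ℕ :=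
  (range (lam.colLen 0 + 1)).filter (JkAddable lam)

/-- removable rows -/
def jkY (lam : YoungDiagram) : Finset ℕ :=
  (range (lam.colLen 0)).filter (fun i => lam.rowLen (i + 1) < lam.rowLen i)

lemma jk_mem_S {r : ℕ} : r ∈ jkS lam ↔ JkAddable lam r := by
  rw [jkS, Finset.mem_filter, Finset.mem_range]
  constructor
  · rintro ⟨_, h⟩; exact h
  · intro h; exact ⟨by have := jk_le h; omega, h⟩

lemma jk_mem_Y {y : ℕ} : y ∈ jkY lam ↔ lam.rowLen (y + 1) < lam.rowLen y := by
  rw [jkY, Finset.mem_filter, Finset.mem_range]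
  constructor
  · rintro ⟨_, h⟩; exact h
  · intro h
    refine ⟨(jk_key y 0).mpr (by omega), h⟩

lemma jk_zero_mem : (0 : ℕ) ∈ jkS lam := jk_mem_S.mpr (Or.inl rfl)

lemma jk_pred_mem_Y {r : ℕ} (hr : JkAddable lam r) (h1 : 1 ≤ r) : r - 1 ∈ jkY lam := by
  rcases hr with rfl | h
  · omega
  · apply jk_mem_Y.mpr
    have h2 : r - 1 + 1 = r := by omega
    rw [h2]
    exact h

lemma jk_z_lt (α : ℝ) (hα : 0 < α) {i i' : ℕ} (h : i < i') : jkZ α lam i' < jkZ α lam i := by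
  have hf : lam.rowLen i' ≤ lam.rowLen i := lam.rowLen_anti _ _ h.le
  have hf' : (lam.rowLen i' : ℝ) ≤ (lam.rowLen i : ℝ) := by exact_mod_cast hf
  have hge : (0:ℝ) ≤ ((lam.rowLen i : ℝ) - (lam.rowLen i' : ℝ)) * α :=
    mul_nonneg (by linarith) hα.le
  have hi : (i : ℝ) < (i' : ℝ) := by exact_mod_cast h
  simp only [jkZ]
  nlinarith

lemma jk_z_inj (α : ℝ) (hα : 0 < α) : Set.InjOn (jkZ α lam) ↑(jkS lam) := by
  intro x _ y _ hxy
  rcases lt_trichotomy x y with h | h | h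
  · exact absurd hxy (jk_z_lt α hα h).ne'
  · exact h
  · exact absurd hxy (jk_z_lt α hα h).ne

lemma jk_card : (jkY lam).card + 1 = (jkS lam).card := by
  have h0 : (0 : ℕ) ∈ jkS lam := jk_zero_mem
  rw [← Finset.card_erase_add_one h0]
  congr 1
  apply Finset.card_bij (fun y _ => y + 1)
  · intro y hy
    rw [Finset.mem_erase]
    exact ⟨by omega, jk_mem_S.mpr (Or.inr (jk_mem_Y.mp hy))⟩
  · intro a _ b _ h
    omega
  · intro x hx
    rw [Finset.mem_erase] at hx
    exact ⟨x - 1, jk_pred_mem_Y (jk_mem_S.mp hx.2) (by omega), by omega⟩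

lemma jk_fg_break {j : ℕ} (hj : j = 0 ∨ lam.colLen j < lam.colLen (j - 1)) :
    lam.rowLen (lam.colLen j) = j := by
  have hle : ¬ (j < lam.rowLen (lam.colLen j)) := fun hlt =>
    lt_irrefl _ ((jk_key (lam.colLen j) j).mpr hlt)
  rcases hj with rfl | h
  · omega
  · rcases Nat.eq_zero_or_pos j with rfl | hj1
    · omega
    · have hgt : j - 1 < lam.rowLen (lam.colLen j) := (jk_key _ (j - 1)).mp h
      omega

lemma jk_addable_gbreak {j : ℕ} (hj : j = 0 ∨ lam.colLen j < lam.colLen (j - 1)) :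
    JkAddable lam (lam.colLen j) := by
  rcases Nat.eq_zero_or_pos (lam.colLen j) with h0 | hpos
  · exact Or.inl h0
  · refine Or.inr ?_
    rw [jk_fg_break hj]
    exact (jk_key (lam.colLen j - 1) j).mp (by omega)

lemma jk_fg1_break {j : ℕ} (hj : lam.colLen (j + 1) < lam.colLen j) :
    lam.rowLen (lam.colLen j - 1) = j + 1 := by
  have h1 : j < lam.rowLen (lam.colLen j - 1) := (jk_key _ j).mp (by omega)
  have h2 : ¬ (j + 1 < lam.rowLen (lam.colLen j - 1)) := fun hlt => by
    have h3 := (jk_key (lam.colLen j - 1) (j + 1)).mpr hlt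
    omega
  omega

lemma jk_gj1_mem_Y {j : ℕ} (hj : lam.colLen (j + 1) < lam.colLen j) :
    lam.colLen j - 1 ∈ jkY lam := by
  apply jk_mem_Y.mpr
  have h1 : lam.colLen j - 1 + 1 = lam.colLen j := by omega
  rw [h1, jk_fg1_break hj]
  have h2 : ¬ (j < lam.rowLen (lam.colLen j)) := fun hlt =>
    lt_irrefl _ ((jk_key _ j).mpr hlt)
  omega

lemma jk_m2 {y : ℕ} (hy : lam.rowLen (y + 1) < lam.rowLen y) :
    lam.colLen (lam.rowLen y - 1) = y + 1 := by
  have h1 : y < lam.colLen (lam.rowLen y - 1) := (jk_key y _).mpr (by omega)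
  have h2 : ¬ (y + 1 < lam.colLen (lam.rowLen y - 1)) := fun hlt => by
    have h3 := (jk_key (y + 1) (lam.rowLen y - 1)).mp hlt
    omega
  omega

lemma jk_m2' {y : ℕ} (hy : lam.rowLen (y + 1) < lam.rowLen y) :
    lam.colLen (lam.rowLen y) ≤ y := by
  by_contra h
  push_neg at h
  have h2 := (jk_key y (lam.rowLen y)).mp h
  omega

lemma jk_f_lt {r x : ℕ} (hx : JkAddable lam x) (hrx : r < x) :
    lam.rowLen x < lam.rowLen r := by
  have hle : lam.rowLen x ≤ lam.rowLen r := lam.rowLen_anti _ _ hrx.le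
  rcases hx with rfl | h
  · omega
  · have h2 : lam.rowLen (x - 1) ≤ lam.rowLen r := lam.rowLen_anti _ _ (by omega)
    omega

lemma jk_Sg_f {x : ℕ} (hx : JkAddable lam x) (hpos : 1 ≤ lam.rowLen x) :
    lam.colLen (lam.rowLen x) < lam.colLen (lam.rowLen x - 1) := by
  rw [jk_gf hx]
  exact (jk_key x (lam.rowLen x - 1)).mpr (by omega)

lemma jk_Bpart (α : ℝ) (hα : 0 < α) {r : ℕ} (hr : JkAddable lam r) :
    ∏ i ∈ range r, (jkZ α lam i - jkZ α lam r - 1) / (jkZ α lam i - jkZ α lam r)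
      = (∏ y ∈ (jkY lam).filter (· < r), (jkZ α lam y - jkZ α lam r - 1)) *
        (∏ x ∈ (jkS lam).filter (· < r), (jkZ α lam x - jkZ α lam r))⁻¹ := by
  have hD : ∀ i, i < r → jkZ α lam i - jkZ α lam r ≠ 0 := fun i hi =>
    ne_of_gt (sub_pos.mpr (jk_z_lt α hα hi))
  rw [Finset.prod_div_distrib]
  have hNum : ∏ i ∈ range r, (jkZ α lam i - jkZ α lam r - 1)
      = (∏ i ∈ (range r).filter (· ∈ jkY lam), (jkZ α lam i - jkZ α lam r - 1)) *
        ∏ i ∈ (range r).filter (fun i => ¬ i ∈ jkY lam), (jkZ α lam (i + 1) - jkZ α lam r) := by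
    rw [← Finset.prod_filter_mul_prod_filter_not (range r) (· ∈ jkY lam)]
    congr 1
    refine Finset.prod_congr rfl fun i hi => ?_
    simp only [Finset.mem_filter, Finset.mem_range] at hi
    obtain ⟨hi1, hi2⟩ := hi
    have hfi : lam.rowLen (i + 1) = lam.rowLen i := by
      have hle := lam.rowLen_anti i (i + 1) (by omega)
      rcases Nat.lt_or_ge (lam.rowLen (i + 1)) (lam.rowLen i) with h | h
      · exact absurd (jk_mem_Y.mpr h) hi2
      · omega
    simp only [jkZ, hfi]
    push_cast
    ring
  have hShift : ∏ i ∈ (range r).filter (fun i => ¬ i ∈ jkY lam), (jkZ α lam (i + 1) - jkZ α lam r)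
      = ∏ x ∈ (range r).filter (fun x => ¬ x ∈ jkS lam), (jkZ α lam x - jkZ α lam r) := by
    refine Finset.prod_nbij' (fun i => i + 1) (fun x => x - 1) ?_ ?_ ?_ ?_ ?_
    · intro a ha
      simp only [Finset.mem_filter, Finset.mem_range] at ha ⊢
      obtain ⟨ha1, ha2⟩ := ha
      have hne : a ≠ r - 1 := by
        intro h
        exact ha2 (h ▸ jk_pred_mem_Y hr (by omega))
      have hlt : a + 1 < r := by omega
      have hns : ¬ (a + 1 ∈ jkS lam) := by
        intro hmem
        rcases jk_mem_S.mp hmem with h0 | h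
        · omega
        · have h1 : a + 1 - 1 = a := by omega
          rw [h1] at h
          exact ha2 (jk_mem_Y.mpr h)
      exact ⟨hlt, hns⟩
    · intro x hx
      simp only [Finset.mem_filter, Finset.mem_range] at hx ⊢
      obtain ⟨hx1, hx2⟩ := hx
      have hx0 : x ≠ 0 := fun h => hx2 (h ▸ jk_zero_mem)
      have hxa : ¬ JkAddable lam x := fun h => hx2 (jk_mem_S.mpr h)
      have hfx : lam.rowLen x = lam.rowLen (x - 1) := by
        have hle := lam.rowLen_anti (x - 1) x (by omega)
        rcases Nat.lt_or_ge (lam.rowLen x) (lam.rowLen (x - 1)) with h | h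
        · exact absurd (Or.inr h) hxa
        · omega
      have hlt : x - 1 < r := by omega
      have hny : ¬ (x - 1 ∈ jkY lam) := by
        intro hmem
        have h2 := jk_mem_Y.mp hmem
        have hx1' : x - 1 + 1 = x := by omega
        rw [hx1'] at h2
        omega
      exact ⟨hlt, hny⟩
    · intro a _
      show a + 1 - 1 = a
      omega
    · intro x hx
      simp only [Finset.mem_filter, Finset.mem_range] at hx
      have hx0 : x ≠ 0 := fun h => hx.2 (h ▸ jk_zero_mem)
      show x - 1 + 1 = x
      omega
    · intro a _
      rfl
  have hDen : ∏ i ∈ range r, (jkZ α lam i - jkZ α lam r)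
      = (∏ x ∈ (range r).filter (· ∈ jkS lam), (jkZ α lam x - jkZ α lam r)) *
        ∏ x ∈ (range r).filter (fun x => ¬ x ∈ jkS lam), (jkZ α lam x - jkZ α lam r) :=
    (Finset.prod_filter_mul_prod_filter_not _ _ _).symm
  have hY : (range r).filter (· ∈ jkY lam) = (jkY lam).filter (· < r) := by
    ext a
    simp only [Finset.mem_filter, Finset.mem_range]
    exact ⟨fun ⟨h1, h2⟩ => ⟨h2, h1⟩, fun ⟨h1, h2⟩ => ⟨h2, h1⟩⟩
  have hS : (range r).filter (· ∈ jkS lam) = (jkS lam).filter (· < r) := by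
    ext a
    simp only [Finset.mem_filter, Finset.mem_range]
    exact ⟨fun ⟨h1, h2⟩ => ⟨h2, h1⟩, fun ⟨h1, h2⟩ => ⟨h2, h1⟩⟩
  have hK : ∏ x ∈ (range r).filter (fun x => ¬ x ∈ jkS lam), (jkZ α lam x - jkZ α lam r) ≠ 0 := by
    rw [Finset.prod_ne_zero_iff]
    intro x hx
    simp only [Finset.mem_filter, Finset.mem_range] at hx
    exact hD x hx.1
  rw [hNum, hShift, hDen, hY, hS, mul_div_mul_right _ _ hK, div_eq_mul_inv]

lemma jk_Apart (α : ℝ) (hα : 0 < α) {r : ℕ} (hr : JkAddable lam r) :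
    ∏ j ∈ range (lam.rowLen r),
        (jkZ α lam r - jkT α lam j - α) / (jkZ α lam r - jkT α lam j)
      = (∏ y ∈ (jkY lam).filter (fun y => ¬ y < r), (jkZ α lam r - (jkZ α lam y - 1))) *
        (∏ x ∈ (jkS lam).filter (fun x => r < x), (jkZ α lam r - jkZ α lam x))⁻¹ := by
  have hE : ∀ j, j < lam.rowLen r → 0 < jkZ α lam r - jkT α lam j := by
    intro j hj
    have hgj : r < lam.colLen j := (jk_key r j).mpr hj
    have h1 : (j : ℝ) + 1 ≤ (lam.rowLen r : ℝ) := by exact_mod_cast hj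
    have h2 : (r : ℝ) + 1 ≤ (lam.colLen j : ℝ) := by exact_mod_cast hgj
    have h3 : (0:ℝ) ≤ ((lam.rowLen r : ℝ) - ((j : ℝ) + 1)) * α := mul_nonneg (by linarith) hα.le
    simp only [jkZ, jkT]
    nlinarith
  rw [Finset.prod_div_distrib]
  have hNum : ∏ j ∈ range (lam.rowLen r), (jkZ α lam r - jkT α lam j - α)
      = (∏ j ∈ (range (lam.rowLen r)).filter (fun j => lam.colLen (j + 1) < lam.colLen j),
            (jkZ α lam r - jkT α lam j - α)) *
        ∏ j ∈ (range (lam.rowLen r)).filter (fun j => ¬ lam.colLen (j + 1) < lam.colLen j),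
            (jkZ α lam r - jkT α lam (j + 1)) := by
    rw [← Finset.prod_filter_mul_prod_filter_not (range (lam.rowLen r))
      (fun j => lam.colLen (j + 1) < lam.colLen j)]
    congr 1
    refine Finset.prod_congr rfl fun j hj => ?_
    simp only [Finset.mem_filter, Finset.mem_range] at hj
    have hg : lam.colLen (j + 1) = lam.colLen j := by
      have := lam.colLen_anti j (j + 1) (by omega)
      omega
    simp only [jkT, hg]
    push_cast
    ring
  have hShift : ∏ j ∈ (range (lam.rowLen r)).filter
        (fun j => ¬ lam.colLen (j + 1) < lam.colLen j), (jkZ α lam r - jkT α lam (j + 1))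
      = ∏ j ∈ (range (lam.rowLen r)).filter
          (fun j => ¬ (j = 0 ∨ lam.colLen j < lam.colLen (j - 1))),
          (jkZ α lam r - jkT α lam j) := by
    refine Finset.prod_nbij' (fun j => j + 1) (fun j => j - 1) ?_ ?_ ?_ ?_ ?_
    · intro a ha
      simp only [Finset.mem_filter, Finset.mem_range] at ha ⊢
      obtain ⟨ha1, ha2⟩ := ha
      have hane : a ≠ lam.rowLen r - 1 := by
        intro h
        apply ha2
        have h1 : a + 1 = lam.rowLen r := by omega
        rw [h1, h]
        have hc : lam.colLen (lam.rowLen r) = r := jk_gf hr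
        have hgc : r < lam.colLen (lam.rowLen r - 1) :=
          (jk_key r (lam.rowLen r - 1)).mpr (by omega)
        omega
      have hlt : a + 1 < lam.rowLen r := by omega
      have hc1 : lam.colLen (a + 1) = lam.colLen a := by
        have := lam.colLen_anti a (a + 1) (by omega)
        omega
      have hns : ¬ (a + 1 = 0 ∨ lam.colLen (a + 1) < lam.colLen (a + 1 - 1)) := by
        intro hmem
        rcases hmem with h0 | h
        · omega
        · have h1 : a + 1 - 1 = a := by omega
          rw [h1] at h
          omega
      exact ⟨hlt, hns⟩
    · intro x hx
      simp only [Finset.mem_filter, Finset.mem_range] at hx ⊢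
      obtain ⟨hx1, hx2⟩ := hx
      push_neg at hx2
      obtain ⟨hx0, hxc⟩ := hx2
      have hcc : lam.colLen x ≤ lam.colLen (x - 1) := lam.colLen_anti _ _ (by omega)
      have hlt : x - 1 < lam.rowLen r := by omega
      have hny : ¬ lam.colLen (x - 1 + 1) < lam.colLen (x - 1) := by
        have h1 : x - 1 + 1 = x := by omega
        rw [h1]
        omega
      exact ⟨hlt, hny⟩
    · intro a _
      show a + 1 - 1 = a
      omega
    · intro x hx
      simp only [Finset.mem_filter, Finset.mem_range] at hx
      push_neg at hx
      show x - 1 + 1 = x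
      omega
    · intro a _
      rfl
  have hDen : ∏ j ∈ range (lam.rowLen r), (jkZ α lam r - jkT α lam j)
      = (∏ j ∈ (range (lam.rowLen r)).filter
            (fun j => j = 0 ∨ lam.colLen j < lam.colLen (j - 1)), (jkZ α lam r - jkT α lam j)) *
        ∏ j ∈ (range (lam.rowLen r)).filter
            (fun j => ¬ (j = 0 ∨ lam.colLen j < lam.colLen (j - 1))),
            (jkZ α lam r - jkT α lam j) :=
    (Finset.prod_filter_mul_prod_filter_not _ _ _).symm
  have hTD : ∏ j ∈ (range (lam.rowLen r)).filter
        (fun j => j = 0 ∨ lam.colLen j < lam.colLen (j - 1)), (jkZ α lam r - jkT α lam j)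
      = ∏ x ∈ (jkS lam).filter (fun x => r < x), (jkZ α lam r - jkZ α lam x) := by
    refine Finset.prod_nbij' (fun j => lam.colLen j) (fun x => lam.rowLen x) ?_ ?_ ?_ ?_ ?_
    · intro j hj
      simp only [Finset.mem_filter, Finset.mem_range] at hj ⊢
      obtain ⟨hj1, hj2⟩ := hj
      exact ⟨jk_mem_S.mpr (jk_addable_gbreak hj2), (jk_key r j).mpr hj1⟩
    · intro x hx
      simp only [Finset.mem_filter, Finset.mem_range] at hx ⊢
      obtain ⟨hx1, hx2⟩ := hx
      have hax := jk_mem_S.mp hx1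
      have hflt : lam.rowLen x < lam.rowLen r := jk_f_lt hax hx2
      have hbr : lam.rowLen x = 0 ∨ lam.colLen (lam.rowLen x) < lam.colLen (lam.rowLen x - 1) := by
        rcases Nat.eq_zero_or_pos (lam.rowLen x) with h0 | hpos
        · exact Or.inl h0
        · exact Or.inr (jk_Sg_f hax hpos)
      exact ⟨hflt, hbr⟩
    · intro j hj
      simp only [Finset.mem_filter, Finset.mem_range] at hj
      exact jk_fg_break hj.2
    · intro x hx
      simp only [Finset.mem_filter] at hx
      exact jk_gf (jk_mem_S.mp hx.1)
    · intro j hj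
      simp only [Finset.mem_filter, Finset.mem_range] at hj
      have h1 : jkT α lam j = jkZ α lam (lam.colLen j) := by
        simp only [jkT, jkZ, jk_fg_break hj.2]
      rw [h1]
  have hTN : ∏ j ∈ (range (lam.rowLen r)).filter
        (fun j => lam.colLen (j + 1) < lam.colLen j), (jkZ α lam r - jkT α lam j - α)
      = ∏ y ∈ (jkY lam).filter (fun y => ¬ y < r), (jkZ α lam r - (jkZ α lam y - 1)) := by
    refine Finset.prod_nbij' (fun j => lam.colLen j - 1) (fun y => lam.rowLen y - 1) ?_ ?_ ?_ ?_ ?_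
    · intro j hj
      simp only [Finset.mem_filter, Finset.mem_range] at hj ⊢
      obtain ⟨hj1, hj2⟩ := hj
      have hgj : r < lam.colLen j := (jk_key r j).mpr hj1
      have hnlt : ¬ lam.colLen j - 1 < r := by omega
      exact ⟨jk_gj1_mem_Y hj2, hnlt⟩
    · intro y hy
      simp only [Finset.mem_filter] at hy ⊢
      obtain ⟨hy1, hy2⟩ := hy
      have hyy := jk_mem_Y.mp hy1
      have hfle : lam.rowLen y ≤ lam.rowLen r := lam.rowLen_anti _ _ (by omega)
      have hg2 := jk_m2 hyy
      have hg3 := jk_m2' hyy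
      have hmem1 : lam.rowLen y - 1 < lam.rowLen r := by omega
      have hmem2 : lam.colLen (lam.rowLen y - 1 + 1) < lam.colLen (lam.rowLen y - 1) := by
        have h1 : lam.rowLen y - 1 + 1 = lam.rowLen y := by omega
        rw [h1, hg2]
        omega
      exact ⟨Finset.mem_range.mpr hmem1, hmem2⟩
    · intro j hj
      simp only [Finset.mem_filter, Finset.mem_range] at hj
      show lam.rowLen (lam.colLen j - 1) - 1 = j
      have := jk_fg1_break hj.2
      omega
    · intro y hy
      simp only [Finset.mem_filter] at hy
      have hyy := jk_mem_Y.mp hy.1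
      show lam.colLen (lam.rowLen y - 1) - 1 = y
      have := jk_m2 hyy
      omega
    · intro j hj
      simp only [Finset.mem_filter, Finset.mem_range] at hj
      obtain ⟨hj1, hj2⟩ := hj
      have hg1 : 1 ≤ lam.colLen j := by omega
      have hfv : lam.rowLen (lam.colLen j - 1) = j + 1 := jk_fg1_break hj2
      simp only [jkZ, jkT, hfv]
      have h2 : ((lam.colLen j - 1 : ℕ) : ℝ) = (lam.colLen j : ℝ) - 1 := by
        rw [Nat.cast_sub hg1, Nat.cast_one]
      rw [h2]
      push_cast
      ring
  have hK : ∏ j ∈ (range (lam.rowLen r)).filter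
      (fun j => ¬ (j = 0 ∨ lam.colLen j < lam.colLen (j - 1))),
      (jkZ α lam r - jkT α lam j) ≠ 0 := by
    rw [Finset.prod_ne_zero_iff]
    intro j hj
    simp only [Finset.mem_filter, Finset.mem_range] at hj
    exact ne_of_gt (hE j hj.1)
  rw [hNum, hShift, hDen, hTD, hTN, mul_div_mul_right _ _ hK, div_eq_mul_inv]

lemma jk_Peq (α : ℝ) (hα : 0 < α) {r : ℕ} (hr : JkAddable lam r) :
    jkP α lam r = (∏ y ∈ jkY lam, (jkZ α lam r - (jkZ α lam y - 1))) *
      ∏ x ∈ (jkS lam).erase r, (jkZ α lam r - jkZ α lam x)⁻¹ := by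
  rw [jkP, jk_Apart α hα hr, jk_Bpart α hα hr]
  have hYsplit : ∏ y ∈ jkY lam, (jkZ α lam r - (jkZ α lam y - 1))
      = (∏ y ∈ (jkY lam).filter (· < r), (jkZ α lam r - (jkZ α lam y - 1))) *
        ∏ y ∈ (jkY lam).filter (fun y => ¬ y < r), (jkZ α lam r - (jkZ α lam y - 1)) :=
    (Finset.prod_filter_mul_prod_filter_not _ _ _).symm
  have hSsplit : ∏ x ∈ (jkS lam).erase r, (jkZ α lam r - jkZ α lam x)⁻¹
      = (∏ x ∈ (jkS lam).filter (· < r), (jkZ α lam r - jkZ α lam x)⁻¹) *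
        ∏ x ∈ (jkS lam).filter (fun x => r < x), (jkZ α lam r - jkZ α lam x)⁻¹ := by
    rw [← Finset.prod_filter_mul_prod_filter_not ((jkS lam).erase r) (· < r)]
    congr 1
    · apply Finset.prod_congr _ (fun _ _ => rfl)
      ext a
      simp only [Finset.mem_filter, Finset.mem_erase]
      constructor
      · rintro ⟨⟨h1, h2⟩, h3⟩
        exact ⟨h2, h3⟩
      · rintro ⟨h1, h2⟩
        exact ⟨⟨by omega, h1⟩, h2⟩
    · apply Finset.prod_congr _ (fun _ _ => rfl)
      ext a
      simp only [Finset.mem_filter, Finset.mem_erase]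
      constructor
      · rintro ⟨⟨h1, h2⟩, h3⟩
        exact ⟨h2, by omega⟩
      · rintro ⟨h1, h2⟩
        exact ⟨⟨by omega, h1⟩, by omega⟩
  have hcard : ((jkS lam).filter (· < r)).card = ((jkY lam).filter (· < r)).card := by
    apply Finset.card_bij (fun x _ => if x = 0 then r - 1 else x - 1)
    · intro x hx
      simp only [Finset.mem_filter] at hx ⊢
      obtain ⟨hx1, hx2⟩ := hx
      by_cases h0 : x = 0
      · rw [if_pos h0]
        refine ⟨jk_pred_mem_Y hr (by omega), by omega⟩
      · rw [if_neg h0]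
        exact ⟨jk_pred_mem_Y (jk_mem_S.mp hx1) (by omega), by omega⟩
    · intro x1 h1 x2 h2 heq
      simp only [Finset.mem_filter] at h1 h2
      by_cases b1 : x1 = 0 <;> by_cases b2 : x2 = 0
      · omega
      · rw [if_pos b1, if_neg b2] at heq
        omega
      · rw [if_neg b1, if_pos b2] at heq
        omega
      · rw [if_neg b1, if_neg b2] at heq
        omega
    · intro y hy
      simp only [Finset.mem_filter] at hy
      obtain ⟨hy1, hy2⟩ := hy
      by_cases hyr : y = r - 1
      · refine ⟨0, ?_, ?_⟩
        · simp only [Finset.mem_filter]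
          exact ⟨jk_zero_mem, by omega⟩
        · rw [if_pos rfl]
          omega
      · refine ⟨y + 1, ?_, ?_⟩
        · simp only [Finset.mem_filter]
          exact ⟨jk_mem_S.mpr (Or.inr (jk_mem_Y.mp hy1)), by omega⟩
        · rw [if_neg (by omega)]
          omega
  have hprodY : ∏ y ∈ (jkY lam).filter (· < r), (jkZ α lam y - jkZ α lam r - 1)
      = (-1 : ℝ) ^ ((jkY lam).filter (· < r)).card *
        ∏ y ∈ (jkY lam).filter (· < r), (jkZ α lam r - (jkZ α lam y - 1)) := by
    rw [← Finset.prod_const (-1 : ℝ), ← Finset.prod_mul_distrib]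
    exact Finset.prod_congr rfl fun y _ => by ring
  have hprodS : ∏ x ∈ (jkS lam).filter (· < r), (jkZ α lam x - jkZ α lam r)
      = (-1 : ℝ) ^ ((jkS lam).filter (· < r)).card *
        ∏ x ∈ (jkS lam).filter (· < r), (jkZ α lam r - jkZ α lam x) := by
    rw [← Finset.prod_const (-1 : ℝ), ← Finset.prod_mul_distrib]
    exact Finset.prod_congr rfl fun y _ => by ring
  have hS0 : ∏ x ∈ (jkS lam).filter (· < r), (jkZ α lam r - jkZ α lam x) ≠ 0 := by
    rw [Finset.prod_ne_zero_iff]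
    intro x hx
    simp only [Finset.mem_filter] at hx
    exact ne_of_lt (sub_neg.mpr (jk_z_lt α hα hx.2))
  have hm1 : ((-1 : ℝ) ^ ((jkY lam).filter (· < r)).card) ≠ 0 := pow_ne_zero _ (by norm_num)
  rw [hYsplit, hSsplit]
  have hpair : (∏ y ∈ (jkY lam).filter (· < r), (jkZ α lam y - jkZ α lam r - 1)) *
      (∏ x ∈ (jkS lam).filter (· < r), (jkZ α lam x - jkZ α lam r))⁻¹
      = (∏ y ∈ (jkY lam).filter (· < r), (jkZ α lam r - (jkZ α lam y - 1))) *
        (∏ x ∈ (jkS lam).filter (· < r), (jkZ α lam r - jkZ α lam x))⁻¹ := by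
    rw [hprodY, hprodS, hcard, mul_inv, mul_comm]
    field_simp
  rw [Finset.prod_inv_distrib, Finset.prod_inv_distrib, hpair]
  ring

lemma jk_sumP (α : ℝ) (hα : 0 < α) : ∑ r ∈ jkS lam, jkP α lam r = 1 := by
  have hL := lagrange_sum (s := jkS lam) (t := jkY lam) (jkZ α lam)
      (fun y => jkZ α lam y - 1) (jk_z_inj α hα) jk_card
  rw [← hL]
  refine Finset.sum_congr rfl fun r hrS => ?_
  rw [jk_Peq α hα (jk_mem_S.mp hrS)]

end JK3

/-- For `α > 0` and every Young diagram `λ`: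
`∑_{Λ : λ ↗ Λ} κ_α(λ,Λ) φ(Λ) = φ(λ)`; hence the numbers
`p_α(λ,Λ) = κ_α(λ,Λ) φ(Λ)/φ(λ)` are nonnegative and sum to `1` over `Λ` with `λ ↗ Λ`,
i.e. they form a system of transition probabilities on the Young lattice. -/
theorem jack_transition_probabilities (α : ℝ) (hα : 0 < α) (lam : YoungDiagram) :
    (∑ᶠ Λ ∈ {Λ : YoungDiagram | YDCovers lam Λ}, jackMult α lam Λ * phiJack α Λ
        = phiJack α lam) ∧
    (∀ Λ : YoungDiagram, YDCovers lam Λ →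
        0 ≤ jackMult α lam Λ * phiJack α Λ / phiJack α lam) ∧
    (∑ᶠ Λ ∈ {Λ : YoungDiagram | YDCovers lam Λ},
        jackMult α lam Λ * phiJack α Λ / phiJack α lam = 1) := by
  classical
  have hset : {Λ : YoungDiagram | YDCovers lam Λ}
      = ↑((jkS lam).image (fun r => jkGrow lam r)) := by
    ext Λ
    simp only [Set.mem_setOf_eq, Finset.coe_image, Set.mem_image, Finset.mem_coe]
    rw [jk_covers_iff]
    constructor
    · rintro ⟨r, hr, rfl⟩
      exact ⟨r, jk_mem_S.mpr hr, rfl⟩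
    · rintro ⟨r, hrS, rfl⟩
      exact ⟨r, jk_mem_S.mp hrS, rfl⟩
  have hinj : ∀ x ∈ jkS lam, ∀ y ∈ jkS lam, jkGrow lam x = jkGrow lam y → x = y := by
    intro x hx y hy hxy
    have hmm : (x, lam.rowLen x) ∈ (jkGrow lam y).cells := by
      rw [← hxy, jkGrow_cells (jk_mem_S.mp hx)]
      exact Finset.mem_insert_self _ _
    rw [jkGrow_cells (jk_mem_S.mp hy), Finset.mem_insert] at hmm
    rcases hmm with h | h
    · exact congrArg Prod.fst h
    · exact absurd h (jk_corner_not_mem x)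
  have hphipos : ∀ μ : YoungDiagram, 0 < phiJack α μ := by
    intro μ
    apply Finset.prod_pos
    intro b _
    have h1 : (0:ℝ) ≤ (armLen μ b : ℝ) * α := mul_nonneg (Nat.cast_nonneg _) hα.le
    have h2 : (0:ℝ) ≤ (legLen μ b : ℝ) := Nat.cast_nonneg _
    have h3 : (0:ℝ) < (armLen μ b : ℝ) * α + (legLen μ b : ℝ) + 1 := by linarith
    exact inv_pos.mpr h3
  have hjmnn : ∀ Λ : YoungDiagram, 0 ≤ jackMult α lam Λ := by
    intro Λ
    apply Finset.prod_nonneg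
    intro b0 _
    apply Finset.prod_nonneg
    intro b _
    have hA : (0:ℝ) ≤ (armLen lam b : ℝ) := Nat.cast_nonneg _
    have hL : (0:ℝ) ≤ (legLen lam b : ℝ) := Nat.cast_nonneg _
    have h1 : (0:ℝ) ≤ (armLen lam b : ℝ) * α := mul_nonneg hA hα.le
    have h3 : (0:ℝ) ≤ ((armLen lam b : ℝ) + 1) * α := mul_nonneg (by linarith) hα.le
    apply div_nonneg
    · apply mul_nonneg <;> linarith
    · apply mul_nonneg <;> linarith
  have hsum' : ∑ r ∈ jkS lam, jackMult α lam (jkGrow lam r) * phiJack α (jkGrow lam r)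
      = phiJack α lam := by
    calc ∑ r ∈ jkS lam, jackMult α lam (jkGrow lam r) * phiJack α (jkGrow lam r)
        = ∑ r ∈ jkS lam, jkP α lam r * phiJack α lam :=
          Finset.sum_congr rfl fun r hrS => jk_step2 α hα (jk_mem_S.mp hrS)
      _ = (∑ r ∈ jkS lam, jkP α lam r) * phiJack α lam := (Finset.sum_mul _ _ _).symm
      _ = phiJack α lam := by rw [jk_sumP α hα, one_mul]
  have hsum : ∑ᶠ Λ ∈ {Λ : YoungDiagram | YDCovers lam Λ}, jackMult α lam Λ * phiJack α Λ
      = phiJack α lam := by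
    rw [hset, finsum_mem_coe_finset, Finset.sum_image hinj]
    exact hsum'
  refine ⟨hsum, fun Λ _ => div_nonneg (mul_nonneg (hjmnn Λ) (hphipos Λ).le) (hphipos lam).le, ?_⟩
  rw [hset, finsum_mem_coe_finset, Finset.sum_image hinj, ← Finset.sum_div, hsum',
    div_self (hphipos lam).ne']
end

section
/- Let α > 0, let Λ be a Young diagram with n = |Λ| boxes, let x_1(α) < y_1(α) < x_2(α) < ⋯ < y_{d-1}(α) < x_d(α) be the interlacing sequences associated with Λ, and let λ be the Young diagram obtained from Λ by removing the removable box whose upper α-content equals y_k(α). Then κ_α(λ,Λ) · dim_α λ / dim_α Λ = [(x_d(α) − y_k(α))(y_k(α) − x_1(α)) / (nα)] · ∏_{i=1}^{k-1} (y_k(α) − x_{i+1}(α))/(y_k(α) − y_i(α)) · ∏_{j=k+1}^{d-1} (y_k(α) − x_j(α))/(y_k(α) − y_j(α)). -/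
/-- `dim_α λ = n! αⁿ ∏_{b∈λ} ((a(b)+1)α + l(b))⁻¹`, where `n = |λ|`. -/
noncomputable def jackDim (α : ℝ) (μ : YoungDiagram) : ℝ :=
  (Nat.factorial μ.card : ℝ) * α ^ μ.card *
    ∏ b ∈ μ.cells, (((armLen μ b : ℝ) + 1) * α + (legLen μ b : ℝ))⁻¹

/-- A box `c ∉ μ` is addable if adjoining it to `μ` gives a Young diagram. -/
def Addable (μ : YoungDiagram) (c : ℕ × ℕ) : Prop :=
  c ∉ μ.cells ∧ ∃ ν : YoungDiagram, ν.cells = insert c μ.cells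

/-- A box `c ∈ μ` is removable if deleting it from `μ` leaves a Young diagram. -/
def Removable (μ : YoungDiagram) (c : ℕ × ℕ) : Prop :=
  c ∈ μ.cells ∧ ∃ ν : YoungDiagram, ν.cells = μ.cells.erase c

/-- The upper `α`-content `αj − i` of a box `b = (i,j)` (0-indexed: `α(j+1) − (i+1)`). -/
noncomputable def upperAlphaContent (α : ℝ) (b : ℕ × ℕ) : ℝ :=
  α * ((b.2 : ℝ) + 1) - ((b.1 : ℝ) + 1)

open Finset

namespace YD


lemma rowLen_le' {μ : YoungDiagram} {i t : ℕ} (h : (i, t) ∉ μ) : μ.rowLen i ≤ t := by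
  by_contra hlt
  exact h (YoungDiagram.mem_iff_lt_rowLen.mpr (Nat.lt_of_not_le hlt))

lemma lt_rowLen' {μ : YoungDiagram} {i t : ℕ} (h : (i, t) ∈ μ) : t < μ.rowLen i :=
  YoungDiagram.mem_iff_lt_rowLen.mp h

lemma colLen_le' {μ : YoungDiagram} {i t : ℕ} (h : (t, i) ∉ μ) : μ.colLen i ≤ t := by
  by_contra hlt
  exact h (YoungDiagram.mem_iff_lt_colLen.mpr (Nat.lt_of_not_le hlt))

lemma lt_colLen' {μ : YoungDiagram} {i t : ℕ} (h : (t, i) ∈ μ) : t < μ.colLen i :=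
  YoungDiagram.mem_iff_lt_colLen.mp h

lemma rowLen_eq' {μ : YoungDiagram} {i t : ℕ} (h1 : (i, t) ∉ μ)
    (h2 : ∀ j, j < t → (i, j) ∈ μ) : μ.rowLen i = t := by
  refine Nat.le_antisymm (rowLen_le' h1) (Nat.le_of_not_lt fun h => ?_)
  exact absurd (lt_rowLen' (h2 _ h)) (lt_irrefl _)

lemma colLen_eq' {μ : YoungDiagram} {j t : ℕ} (h1 : (t, j) ∉ μ)
    (h2 : ∀ i, i < t → (i, j) ∈ μ) : μ.colLen j = t := by
  refine Nat.le_antisymm (colLen_le' h1) (Nat.le_of_not_lt fun h => ?_)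
  exact absurd (lt_colLen' (h2 _ h)) (lt_irrefl _)

lemma removable_iff' {Λ : YoungDiagram} {i j : ℕ} :
    Removable Λ (i, j) ↔ Λ.rowLen i = j + 1 ∧ Λ.colLen j = i + 1 := by
  constructor
  · rintro ⟨hmem, ν, hν⟩
    have hrow : (i, j + 1) ∉ Λ := by
      intro h
      have h1 : (i, j + 1) ∈ ν.cells := by
        rw [hν, Finset.mem_erase]
        exact ⟨by simp, h⟩
      have h2 : (i, j) ∈ ν.cells := ν.up_left_mem le_rfl (Nat.le_succ j) h1
      rw [hν, Finset.mem_erase] at h2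
      exact h2.1 rfl
    have hcol : (i + 1, j) ∉ Λ := by
      intro h
      have h1 : (i + 1, j) ∈ ν.cells := by
        rw [hν, Finset.mem_erase]
        exact ⟨by simp, h⟩
      have h2 : (i, j) ∈ ν.cells := ν.up_left_mem (Nat.le_succ i) le_rfl h1
      rw [hν, Finset.mem_erase] at h2
      exact h2.1 rfl
    exact ⟨rowLen_eq' hrow fun j' hj' => Λ.up_left_mem le_rfl (Nat.lt_succ_iff.mp hj') hmem,
           colLen_eq' hcol fun i' hi' => Λ.up_left_mem (Nat.lt_succ_iff.mp hi') le_rfl hmem⟩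
  · rintro ⟨hr, hc⟩
    have hmem : (i, j) ∈ Λ := YoungDiagram.mem_iff_lt_rowLen.mpr (by omega)
    have hrow : (i, j + 1) ∉ Λ := fun h => by have := lt_rowLen' h; omega
    have hcol : (i + 1, j) ∉ Λ := fun h => by have := lt_colLen' h; omega
    refine ⟨hmem, ⟨⟨Λ.cells.erase (i, j), ?_⟩, rfl⟩⟩
    intro a b hba ha
    simp only [Finset.coe_erase, Set.mem_diff, Finset.mem_coe, YoungDiagram.mem_cells,
      Set.mem_singleton_iff] at ha ⊢
    refine ⟨Λ.isLowerSet hba ha.1, fun hb => ?_⟩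
    subst hb
    obtain ⟨h1, h2⟩ := hba
    rcases Nat.lt_or_ge i a.1 with h | h
    · exact hcol (Λ.up_left_mem h h2 ha.1)
    · rcases Nat.lt_or_ge j a.2 with h' | h'
      · exact hrow (Λ.up_left_mem h1 h' ha.1)
      · exact ha.2 (Prod.ext (le_antisymm h h1) (le_antisymm h' h2))

lemma addable_iff_row' {Λ : YoungDiagram} {i j : ℕ} :
    Addable Λ (i, j) ↔ j = Λ.rowLen i ∧ (i = 0 ∨ Λ.rowLen i < Λ.rowLen (i - 1)) := by
  constructor
  · rintro ⟨hmem, ν, hν⟩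
    have hij : (i, j) ∈ ν.cells := by rw [hν]; exact Finset.mem_insert_self _ _
    have hsub : ∀ p : ℕ × ℕ, p ∈ ν → p ≠ (i, j) → p ∈ Λ := by
      intro p hp hne
      have := hp
      rw [← YoungDiagram.mem_cells, hν, Finset.mem_insert] at this
      tauto
    have hj : j = Λ.rowLen i := by
      refine (rowLen_eq' hmem fun j' hj' => ?_).symm
      have : (i, j') ∈ ν := ν.up_left_mem le_rfl (le_of_lt hj') hij
      exact hsub _ this (by simp [Prod.ext_iff]; omega)
    refine ⟨hj, ?_⟩
    rcases Nat.eq_zero_or_pos i with h0 | h0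
    · exact Or.inl h0
    · right
      have : (i - 1, j) ∈ ν := ν.up_left_mem (by omega) le_rfl hij
      have : (i - 1, j) ∈ Λ := hsub _ this (by simp [Prod.ext_iff]; omega)
      have := lt_rowLen' this
      omega
  · rintro ⟨hj, hcorner⟩
    have hmem : (i, j) ∉ Λ := fun h => by have := lt_rowLen' h; omega
    refine ⟨hmem, ⟨⟨insert (i, j) Λ.cells, ?_⟩, rfl⟩⟩
    intro a b hba ha
    simp only [Finset.coe_insert, Set.mem_insert_iff, Finset.mem_coe,
      YoungDiagram.mem_cells] at ha ⊢
    rcases ha with ha | ha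
    · subst ha
      obtain ⟨h1, h2⟩ := hba
      rcases eq_or_ne b (i, j) with hb | hb
      · exact Or.inl hb
      · right
        rcases Nat.lt_or_ge b.1 i with h | h
        · have hi0 : i ≠ 0 := by omega
          have hlt : Λ.rowLen i < Λ.rowLen (i - 1) := hcorner.resolve_left hi0
          have : Λ.rowLen (i - 1) ≤ Λ.rowLen b.1 := Λ.rowLen_anti _ _ (by omega)
          exact YoungDiagram.mem_iff_lt_rowLen.mpr (by omega)
        · have hbi : b.1 = i := le_antisymm h1 h
          have : b.2 < j := by
            rcases Nat.lt_or_ge b.2 j with h' | h'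
            · exact h'
            · exact absurd (Prod.ext hbi (le_antisymm h2 h')) hb
          refine YoungDiagram.mem_iff_lt_rowLen.mpr ?_
          rw [hbi]; omega
    · exact Or.inr (Λ.isLowerSet hba ha)

lemma addable_iff_col' {Λ : YoungDiagram} {i j : ℕ} :
    Addable Λ (i, j) ↔ i = Λ.colLen j ∧ (j = 0 ∨ Λ.colLen j < Λ.colLen (j - 1)) := by
  constructor
  · rintro ⟨hmem, ν, hν⟩
    have hij : (i, j) ∈ ν.cells := by rw [hν]; exact Finset.mem_insert_self _ _
    have hsub : ∀ p : ℕ × ℕ, p ∈ ν → p ≠ (i, j) → p ∈ Λ := by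
      intro p hp hne
      have := hp
      rw [← YoungDiagram.mem_cells, hν, Finset.mem_insert] at this
      tauto
    have hi : i = Λ.colLen j := by
      refine (colLen_eq' hmem fun i' hi' => ?_).symm
      have : (i', j) ∈ ν := ν.up_left_mem (le_of_lt hi') le_rfl hij
      exact hsub _ this (by simp [Prod.ext_iff]; omega)
    refine ⟨hi, ?_⟩
    rcases Nat.eq_zero_or_pos j with h0 | h0
    · exact Or.inl h0
    · right
      have : (i, j - 1) ∈ ν := ν.up_left_mem le_rfl (by omega) hij
      have : (i, j - 1) ∈ Λ := hsub _ this (by simp [Prod.ext_iff]; omega)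
      have := lt_colLen' this
      omega
  · rintro ⟨hi, hcorner⟩
    have hmem : (i, j) ∉ Λ := fun h => by have := lt_colLen' h; omega
    refine ⟨hmem, ⟨⟨insert (i, j) Λ.cells, ?_⟩, rfl⟩⟩
    intro a b hba ha
    simp only [Finset.coe_insert, Set.mem_insert_iff, Finset.mem_coe,
      YoungDiagram.mem_cells] at ha ⊢
    rcases ha with ha | ha
    · subst ha
      obtain ⟨h1, h2⟩ := hba
      rcases eq_or_ne b (i, j) with hb | hb
      · exact Or.inl hb
      · right
        rcases Nat.lt_or_ge b.2 j with h | h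
        · have hj0 : j ≠ 0 := by omega
          have hlt : Λ.colLen j < Λ.colLen (j - 1) := hcorner.resolve_left hj0
          have : Λ.colLen (j - 1) ≤ Λ.colLen b.2 := Λ.colLen_anti _ _ (by omega)
          exact YoungDiagram.mem_iff_lt_colLen.mpr (by omega)
        · have hbj : b.2 = j := le_antisymm h2 h
          have : b.1 < i := by
            rcases Nat.lt_or_ge b.1 i with h' | h'
            · exact h'
            · exact absurd (Prod.ext (le_antisymm h1 h') hbj) hb
          refine YoungDiagram.mem_iff_lt_colLen.mpr ?_
          rw [hbj]; omega
    · exact Or.inr (Λ.isLowerSet hba ha)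



lemma telescope (v : ℝ) (X Y : ℕ → ℝ) (m : ℕ) (P : ℕ → Prop) [DecidablePred P]
    (hXY : ∀ j, 1 ≤ j → j ≤ m → ¬ P j → Y (j - 1) = X j)
    (hX : ∀ j, 1 ≤ j → j ≤ m → v - X j ≠ 0) :
    (∏ j ∈ range (m + 1), (v - X j)) / (∏ j ∈ range m, (v - Y j))
      = (v - X 0) * ∏ j ∈ (Icc 1 m).filter P, ((v - X j) / (v - Y (j - 1))) := by
  rw [Finset.prod_range_succ']
  have h1 : (∏ j ∈ range m, (v - X (j + 1))) * (v - X 0) / (∏ j ∈ range m, (v - Y j))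
      = (v - X 0) * ∏ j ∈ range m, ((v - X (j + 1)) / (v - Y j)) := by
    rw [Finset.prod_div_distrib]
    ring
  rw [h1]
  congr 1
  rw [← Finset.prod_filter_of_ne (p := fun j => P (j + 1)) (s := range m)
    (f := fun j => (v - X (j + 1)) / (v - Y j)) ?_]
  · refine Finset.prod_nbij' (fun j => j + 1) (fun j => j - 1) ?_ ?_ ?_ ?_ ?_
    · intro a ha
      simp only [mem_filter, mem_range] at ha
      simp only [mem_filter, mem_Icc]
      exact ⟨⟨by omega, by omega⟩, ha.2⟩
    · intro a ha
      simp only [mem_filter, mem_Icc] at ha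
      simp only [mem_filter, mem_range]
      constructor
      · omega
      · have : a - 1 + 1 = a := by omega
        rw [this]; exact ha.2
    · intro a _; simp
    · intro a ha
      simp only [mem_filter, mem_Icc] at ha
      omega
    · intro a ha
      simp only [mem_filter, mem_range] at ha
      simp
  · intro j hj hne
    rw [mem_range] at hj
    by_contra hP
    have := hXY (j + 1) (by omega) (by omega) hP
    simp only [Nat.add_sub_cancel] at this
    rw [this, div_self (hX (j + 1) (by omega) (by omega))] at hne
    exact hne rfl

lemma image_erase_of_injOn {s : Finset ℕ} {f : ℕ → ℝ} (hf : Set.InjOn f s)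
    {a : ℕ} (ha : a ∈ s) : (s.erase a).image f = (s.image f).erase (f a) := by
  ext v
  simp only [mem_image, mem_erase]
  constructor
  · rintro ⟨b, hb, rfl⟩
    exact ⟨fun h => hb.1 (hf hb.2 ha h), ⟨b, hb.2, rfl⟩⟩
  · rintro ⟨hv, b, hb, rfl⟩
    exact ⟨b, ⟨fun h => hv (by rw [h]), hb⟩, rfl⟩

lemma image_erase_of_injOn' {s : Finset (ℕ × ℕ)} {f : ℕ × ℕ → ℝ} (hf : Set.InjOn f s)
    {a : ℕ × ℕ} (ha : a ∈ s) : (s.erase a).image f = (s.image f).erase (f a) := by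
  ext v
  simp only [mem_image, mem_erase]
  constructor
  · rintro ⟨b, hb, rfl⟩
    exact ⟨fun h => hb.1 (hf hb.2 ha h), ⟨b, hb.2, rfl⟩⟩
  · rintro ⟨hv, b, hb, rfl⟩
    exact ⟨b, ⟨fun h => hv (by rw [h]), hb⟩, rfl⟩





/-- the addable boxes of `Λ` as a finset -/
def adds (Λ : YoungDiagram) : Finset (ℕ × ℕ) :=
  ((range (Λ.colLen 0 + 1)) ×ˢ (range (Λ.rowLen 0 + 1))).filter
    (fun p => p.2 = Λ.rowLen p.1 ∧ (p.1 = 0 ∨ Λ.rowLen p.1 < Λ.rowLen (p.1 - 1)))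

/-- the removable boxes of `Λ` as a finset -/
def rems (Λ : YoungDiagram) : Finset (ℕ × ℕ) :=
  ((range (Λ.colLen 0 + 1)) ×ˢ (range (Λ.rowLen 0 + 1))).filter
    (fun p => Λ.rowLen p.1 = p.2 + 1 ∧ Λ.colLen p.2 = p.1 + 1)

lemma mem_adds {Λ : YoungDiagram} {p : ℕ × ℕ} : p ∈ adds Λ ↔ Addable Λ p := by
  obtain ⟨i, j⟩ := p
  rw [adds, mem_filter, addable_iff_row']
  simp only [mem_product, mem_range]
  constructor
  · rintro ⟨-, h⟩; exact h
  · rintro ⟨hj, hcor⟩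
    refine ⟨⟨?_, ?_⟩, hj, hcor⟩
    · have : i = Λ.colLen j := (addable_iff_col'.mp (addable_iff_row'.mpr ⟨hj, hcor⟩)).1
      have := Λ.colLen_anti 0 j (Nat.zero_le j)
      omega
    · have := Λ.rowLen_anti 0 i (Nat.zero_le i)
      omega

lemma mem_rems {Λ : YoungDiagram} {p : ℕ × ℕ} : p ∈ rems Λ ↔ Removable Λ p := by
  obtain ⟨i, j⟩ := p
  rw [rems, mem_filter, removable_iff']
  simp only [mem_product, mem_range]
  constructor
  · rintro ⟨-, h⟩; exact h
  · rintro ⟨hr, hc⟩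
    have hmem : (i, j) ∈ Λ := YoungDiagram.mem_iff_lt_rowLen.mpr (by omega)
    refine ⟨⟨?_, ?_⟩, hr, hc⟩
    · have := lt_colLen' hmem
      have := Λ.colLen_anti 0 j (Nat.zero_le j)
      omega
    · have := lt_rowLen' hmem
      have := Λ.rowLen_anti 0 i (Nat.zero_le i)
      omega

section Lam
variable {Λ lam : YoungDiagram} {r c : ℕ}
  (hmem : (r, c) ∈ Λ)
  (hrow0 : Λ.rowLen r = c + 1) (hcol0 : Λ.colLen c = r + 1)
  (hlam : lam.cells = Λ.cells.erase (r, c))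

include hlam hmem in
lemma mem_lam_iff {p : ℕ × ℕ} : p ∈ lam ↔ p ∈ Λ ∧ p ≠ (r, c) := by
  rw [← YoungDiagram.mem_cells, hlam, Finset.mem_erase]
  exact ⟨fun h => ⟨h.2, h.1⟩, fun h => ⟨h.2, h.1⟩⟩

include hlam hmem hrow0 in
lemma lam_rowLen : ∀ i, lam.rowLen i = if i = r then c else Λ.rowLen i := by
  intro i
  split_ifs with h
  · subst h
    refine rowLen_eq' ?_ fun j hj => ?_
    · rw [mem_lam_iff hmem hlam]
      rintro ⟨-, hne⟩; exact hne rfl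
    · rw [mem_lam_iff hmem hlam]
      exact ⟨Λ.up_left_mem le_rfl (by omega) hmem, by simp [Prod.ext_iff]; omega⟩
  · refine rowLen_eq' ?_ fun j hj => ?_
    · rw [mem_lam_iff hmem hlam]
      rintro ⟨hm, -⟩
      exact absurd (lt_rowLen' hm) (lt_irrefl _)
    · rw [mem_lam_iff hmem hlam]
      exact ⟨YoungDiagram.mem_iff_lt_rowLen.mpr hj, by simp [Prod.ext_iff]; tauto⟩

include hlam hmem hcol0 in
lemma lam_colLen : ∀ j, lam.colLen j = if j = c then r else Λ.colLen j := by
  intro j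
  split_ifs with h
  · subst h
    refine colLen_eq' ?_ fun i hi => ?_
    · rw [mem_lam_iff hmem hlam]
      rintro ⟨-, hne⟩; exact hne rfl
    · rw [mem_lam_iff hmem hlam]
      exact ⟨Λ.up_left_mem (by omega) le_rfl hmem, by simp [Prod.ext_iff]; omega⟩
  · refine colLen_eq' ?_ fun i hi => ?_
    · rw [mem_lam_iff hmem hlam]
      rintro ⟨hm, -⟩
      exact absurd (lt_colLen' hm) (lt_irrefl _)
    · rw [mem_lam_iff hmem hlam]
      exact ⟨YoungDiagram.mem_iff_lt_colLen.mpr hi, by simp [Prod.ext_iff]; tauto⟩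

end Lam


noncomputable def hk (α : ℝ) (μ : YoungDiagram) (b : ℕ × ℕ) : ℝ :=
  ((armLen μ b : ℝ) + 1) * α + (legLen μ b : ℝ)

lemma hk_pos {α : ℝ} (hα : 0 < α) (μ : YoungDiagram) (b : ℕ × ℕ) : 0 < hk α μ b := by
  rw [hk]
  have h1 : (0:ℝ) ≤ (armLen μ b : ℝ) := Nat.cast_nonneg _
  have h2 : (0:ℝ) ≤ (legLen μ b : ℝ) := Nat.cast_nonneg _
  nlinarith

lemma hk_ne {α : ℝ} (hα : 0 < α) (μ : YoungDiagram) (b : ℕ × ℕ) : hk α μ b ≠ 0 :=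
  ne_of_gt (hk_pos hα μ b)

/-- the column-factor cancellation -/
lemma alg_col {α A L : ℝ} (hα : 0 < α) (hA : 0 ≤ A) (hL : 0 ≤ L) :
    (A * α + L + 2) * ((A + 1) * α + L) / (((A + 1) * α + L + 1) * (A * α + L + 1)) *
      (((A + 1) * α + (L + 1)) / ((A + 1) * α + L))
      = (A * α + L + 2) / (A * α + L + 1) := by
  have h1 : (A + 1) * α + L > 0 := by nlinarith
  have h2 : (A + 1) * α + L + 1 > 0 := by nlinarith
  have h3 : A * α + L + 1 > 0 := by nlinarith
  field_simp
  ring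




section Fac
variable {α : ℝ} {Λ lam : YoungDiagram} {r c : ℕ}

lemma rowfac (hα : 0 < α)
    (hrow0 : Λ.rowLen r = c + 1) (hcol0 : Λ.colLen c = r + 1)
    (hlr : ∀ i, lam.rowLen i = if i = r then c else Λ.rowLen i)
    (hlc : ∀ j, lam.colLen j = if j = c then r else Λ.colLen j)
    {j : ℕ} (hj : j < c) :
    hk α Λ (r, j) / hk α lam (r, j)
      = ((α * ((c:ℝ) + 1) - ((r:ℝ) + 1)) - (α * (j:ℝ) - (Λ.colLen j : ℝ)))
        / ((α * ((c:ℝ) + 1) - ((r:ℝ) + 1)) - (α * ((j:ℝ) + 1) - (Λ.colLen j : ℝ))) := by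
  have hKj : r + 1 ≤ Λ.colLen j := hcol0 ▸ Λ.colLen_anti j c (le_of_lt hj)
  have ha1 : armLen Λ (r, j) = c - j := by
    simp only [armLen, hrow0]; omega
  have ha2 : armLen lam (r, j) = c - (j + 1) := by
    simp only [armLen, hlr r, eq_self_iff_true, if_true]; omega
  have hl1 : legLen Λ (r, j) = Λ.colLen j - (r + 1) := by
    simp only [legLen]; omega
  have hl2 : legLen lam (r, j) = Λ.colLen j - (r + 1) := by
    simp only [legLen, hlc j, if_neg (by omega : ¬ j = c)]; omega
  have e1 : hk α Λ (r, j)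
      = ((α * ((c:ℝ) + 1) - ((r:ℝ) + 1)) - (α * (j:ℝ) - (Λ.colLen j : ℝ))) := by
    rw [hk, ha1, hl1, Nat.cast_sub (le_of_lt hj), Nat.cast_sub hKj]
    push_cast; ring
  have e2 : hk α lam (r, j)
      = ((α * ((c:ℝ) + 1) - ((r:ℝ) + 1)) - (α * ((j:ℝ) + 1) - (Λ.colLen j : ℝ))) := by
    rw [hk, ha2, hl2, Nat.cast_sub (by omega : j + 1 ≤ c), Nat.cast_sub hKj]
    push_cast; ring
  rw [e1, e2]

lemma colfac (hα : 0 < α)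
    (hrow0 : Λ.rowLen r = c + 1) (hcol0 : Λ.colLen c = r + 1)
    (hRanti : ∀ i, i ≤ r → c + 1 ≤ Λ.rowLen i)
    (hlr : ∀ i, lam.rowLen i = if i = r then c else Λ.rowLen i)
    (hlc : ∀ j, lam.colLen j = if j = c then r else Λ.colLen j)
    {i : ℕ} (hi : i < r) :
    (((armLen lam (i, c) : ℝ) * α + (legLen lam (i, c) : ℝ) + 2) *
        (((armLen lam (i, c) : ℝ) + 1) * α + (legLen lam (i, c) : ℝ))) /
      ((((armLen lam (i, c) : ℝ) + 1) * α + (legLen lam (i, c) : ℝ) + 1) *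
        ((armLen lam (i, c) : ℝ) * α + (legLen lam (i, c) : ℝ) + 1)) *
      (hk α Λ (i, c) / hk α lam (i, c))
      = ((α * ((c:ℝ) + 1) - ((r:ℝ) + 1)) - (α * (Λ.rowLen i : ℝ) - (i:ℝ)))
        / ((α * ((c:ℝ) + 1) - ((r:ℝ) + 1)) - (α * (Λ.rowLen i : ℝ) - ((i:ℝ) + 1))) := by
  have hRi : c + 1 ≤ Λ.rowLen i := hRanti i (le_of_lt hi)
  set A : ℝ := (Λ.rowLen i : ℝ) - ((c:ℝ) + 1) with hA
  set L : ℝ := (r : ℝ) - (i:ℝ) - 1 with hL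
  have hA0 : 0 ≤ A := by
    rw [hA]
    have : ((c:ℝ) + 1) ≤ (Λ.rowLen i : ℝ) := by exact_mod_cast hRi
    linarith
  have hL0 : 0 ≤ L := by
    rw [hL]
    have : (i:ℝ) + 1 ≤ (r:ℝ) := by exact_mod_cast hi
    linarith
  have harm : (armLen lam (i, c) : ℝ) = A := by
    have h1 : armLen lam (i, c) = Λ.rowLen i - (c + 1) := by
      simp only [armLen, hlr i, if_neg (by omega : ¬ i = r)]; omega
    rw [h1, Nat.cast_sub hRi]; push_cast [hA]; ring
  have hlegl : (legLen lam (i, c) : ℝ) = L := by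
    have h1 : legLen lam (i, c) = r - (i + 1) := by
      simp only [legLen, hlc c, eq_self_iff_true, if_true]; omega
    rw [h1, Nat.cast_sub (by omega : i + 1 ≤ r)]; push_cast [hL]; ring
  have harmΛ : (armLen Λ (i, c) : ℝ) = A := by
    have h1 : armLen Λ (i, c) = Λ.rowLen i - (c + 1) := by
      simp only [armLen]; omega
    rw [h1, Nat.cast_sub hRi]; push_cast [hA]; ring
  have hkΛ : hk α Λ (i, c) = (A + 1) * α + (L + 1) := by
    have h1 : legLen Λ (i, c) = r - i := by
      simp only [legLen, hcol0]; omega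
    rw [hk, harmΛ, h1, Nat.cast_sub (le_of_lt hi)]
    push_cast [hL]; ring
  have hklam : hk α lam (i, c) = (A + 1) * α + L := by
    rw [hk, harm, hlegl]
  have hnum : ((α * ((c:ℝ) + 1) - ((r:ℝ) + 1)) - (α * (Λ.rowLen i : ℝ) - (i:ℝ)))
      = -(A * α + L + 2) := by rw [hA, hL]; ring
  have hden : ((α * ((c:ℝ) + 1) - ((r:ℝ) + 1)) - (α * (Λ.rowLen i : ℝ) - ((i:ℝ) + 1)))
      = -(A * α + L + 1) := by rw [hA, hL]; ring
  rw [harm, hlegl, hkΛ, hklam, hnum, hden, neg_div_neg_eq]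
  exact alg_col hα hA0 hL0

end Fac

noncomputable def kf (α : ℝ) (μ : YoungDiagram) (b : ℕ × ℕ) : ℝ :=
  (((armLen μ b : ℝ) * α + (legLen μ b : ℝ) + 2) *
        (((armLen μ b : ℝ) + 1) * α + (legLen μ b : ℝ))) /
      ((((armLen μ b : ℝ) + 1) * α + (legLen μ b : ℝ) + 1) *
        ((armLen μ b : ℝ) * α + (legLen μ b : ℝ) + 1))

section HR
variable {α : ℝ} {Λ lam : YoungDiagram} {r c : ℕ}

lemma prod_singleton_snd (s : Finset ℕ) (c : ℕ) (f : ℕ × ℕ → ℝ) :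
    ∏ p ∈ s ×ˢ ({c} : Finset ℕ), f p = ∏ i ∈ s, f (i, c) := by
  rw [Finset.prod_product]
  simp

lemma prod_singleton_fst (s : Finset ℕ) (r : ℕ) (f : ℕ × ℕ → ℝ) :
    ∏ p ∈ ({r} : Finset ℕ) ×ˢ s, f p = ∏ j ∈ s, f (r, j) := by
  rw [Finset.prod_product]
  simp

lemma hook_ratio (hα : 0 < α)
    (hmem : (r, c) ∈ Λ)
    (hrow0 : Λ.rowLen r = c + 1) (hcol0 : Λ.colLen c = r + 1)
    (hlam : lam.cells = Λ.cells.erase (r, c))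
    (hlr : ∀ i, lam.rowLen i = if i = r then c else Λ.rowLen i)
    (hlc : ∀ j, lam.colLen j = if j = c then r else Λ.colLen j) :
    jackMult α lam Λ * ((∏ b ∈ Λ.cells, hk α Λ b) / (∏ b ∈ lam.cells, hk α lam b))
      = α * (∏ j ∈ range c, (hk α Λ (r, j) / hk α lam (r, j)))
          * ∏ i ∈ range r, (kf α lam (i, c) * (hk α Λ (i, c) / hk α lam (i, c))) := by
  have hmemc : (r, c) ∈ Λ.cells := hmem
  have hcolc : lam.cells.filter (fun q => q.2 = c) = range r ×ˢ ({c} : Finset ℕ) := by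
    ext ⟨a, b⟩
    simp only [mem_filter, mem_product, mem_range, mem_singleton,
      YoungDiagram.mem_cells]
    constructor
    · rintro ⟨hm, hb⟩
      rw [hb] at hm
      have := YoungDiagram.mem_iff_lt_colLen.mp hm
      rw [hlc c, if_pos rfl] at this
      exact ⟨this, hb⟩
    · rintro ⟨ha, hb⟩
      rw [hb]
      refine ⟨YoungDiagram.mem_iff_lt_colLen.mpr ?_, rfl⟩
      rw [hlc c, if_pos rfl]
      exact ha
  have hrowr : (lam.cells.filter (fun q => ¬ q.2 = c)).filter (fun q => q.1 = r)
      = ({r} : Finset ℕ) ×ˢ range c := by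
    ext ⟨a, b⟩
    simp only [mem_filter, mem_product, mem_range, mem_singleton,
      YoungDiagram.mem_cells]
    constructor
    · rintro ⟨⟨hm, -⟩, ha⟩
      rw [ha] at hm
      have := YoungDiagram.mem_iff_lt_rowLen.mp hm
      rw [hlr r, if_pos rfl] at this
      exact ⟨ha, this⟩
    · rintro ⟨ha, hb⟩
      rw [ha]
      have hm : (r, b) ∈ lam := by
        refine YoungDiagram.mem_iff_lt_rowLen.mpr ?_
        rw [hlr r, if_pos rfl]
        exact hb
      exact ⟨⟨hm, by omega⟩, rfl⟩
  -- jackMult reduction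
  have hsd : Λ.cells \ lam.cells = {(r, c)} := by
    rw [hlam]
    exact Finset.sdiff_erase_self hmemc
  have hjm : jackMult α lam Λ = ∏ i ∈ range r, kf α lam (i, c) := by
    rw [jackMult, hsd, Finset.prod_singleton]
    have : lam.cells.filter (fun q => q.2 = ((r, c) : ℕ × ℕ).2) = range r ×ˢ ({c} : Finset ℕ) :=
      hcolc
    rw [this, prod_singleton_snd]
    rfl
  -- hook at (r,c)
  have hkb0 : hk α Λ (r, c) = α := by
    have h1 : armLen Λ (r, c) = 0 := by simp only [armLen, hrow0]; omega
    have h2 : legLen Λ (r, c) = 0 := by simp only [legLen, hcol0]; omega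
    rw [hk, h1, h2]
    norm_num
  have hsplitΛ : (∏ b ∈ Λ.cells, hk α Λ b) = α * ∏ b ∈ lam.cells, hk α Λ b := by
    rw [hlam, ← Finset.mul_prod_erase Λ.cells _ hmemc, hkb0]
  -- main product split
  have hq : ∏ b ∈ lam.cells, (hk α Λ b / hk α lam b)
      = (∏ i ∈ range r, (hk α Λ (i, c) / hk α lam (i, c)))
        * ∏ j ∈ range c, (hk α Λ (r, j) / hk α lam (r, j)) := by
    rw [← Finset.prod_filter_mul_prod_filter_not lam.cells (fun q => q.2 = c)]
    congr 1
    · rw [hcolc, prod_singleton_snd]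
    · rw [← Finset.prod_filter_mul_prod_filter_not
        (lam.cells.filter (fun q => ¬ q.2 = c)) (fun q => q.1 = r)]
      have hone : ∏ b ∈ (lam.cells.filter (fun q => ¬ q.2 = c)).filter (fun q => ¬ q.1 = r),
          (hk α Λ b / hk α lam b) = 1 := by
        refine Finset.prod_eq_one fun b hb => ?_
        simp only [mem_filter] at hb
        obtain ⟨⟨-, hbc⟩, hbr⟩ := hb
        have harm : armLen lam b = armLen Λ b := by
          simp only [armLen, hlr b.1, if_neg hbr]
        have hleg : legLen lam b = legLen Λ b := by
          simp only [legLen, hlc b.2, if_neg hbc]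
        rw [div_eq_one_iff_eq (hk_ne hα lam b), hk, hk, harm, hleg]
      rw [hone, mul_one, hrowr, prod_singleton_fst]
  calc jackMult α lam Λ * ((∏ b ∈ Λ.cells, hk α Λ b) / (∏ b ∈ lam.cells, hk α lam b))
      = (∏ i ∈ range r, kf α lam (i, c)) *
          (α * ((∏ b ∈ lam.cells, hk α Λ b) / (∏ b ∈ lam.cells, hk α lam b))) := by
        rw [hjm, hsplitΛ]; ring
    _ = (∏ i ∈ range r, kf α lam (i, c)) *
          (α * ∏ b ∈ lam.cells, (hk α Λ b / hk α lam b)) := by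
        rw [Finset.prod_div_distrib]
    _ = _ := by
        rw [hq, Finset.prod_mul_distrib]
        ring
end HR


def rowF (Λ : YoungDiagram) (c : ℕ) : Finset ℕ :=
  (Icc 1 c).filter (fun j => Λ.colLen (j - 1) ≠ Λ.colLen j)
def colF (Λ : YoungDiagram) (r : ℕ) : Finset ℕ :=
  (Icc 1 r).filter (fun i => Λ.rowLen (i - 1) ≠ Λ.rowLen i)

section NS
variable {α : ℝ} {Λ : YoungDiagram} {r c : ℕ}

lemma adds_lo (hrow0 : Λ.rowLen r = c + 1) (hcol0 : Λ.colLen c = r + 1) :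
    (adds Λ).filter (fun p => p.2 ≤ c)
      = (insert 0 (rowF Λ c)).image (fun j => (Λ.colLen j, j)) := by
  ext ⟨a, b⟩
  simp only [mem_filter, mem_image, mem_insert, mem_adds, rowF, mem_filter, mem_Icc]
  constructor
  · rintro ⟨hadd, hb⟩
    obtain ⟨ha, hcor⟩ := addable_iff_col'.mp hadd
    refine ⟨b, ?_, by rw [Prod.ext_iff]; exact ⟨by rw [ha], rfl⟩⟩
    rcases hcor with h0 | hlt
    · exact Or.inl h0
    · rcases Nat.eq_zero_or_pos b with h0 | h0
      · exact Or.inl h0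
      · exact Or.inr ⟨⟨h0, hb⟩, by omega⟩
  · rintro ⟨j, hj, hp⟩
    injection hp with hp1 hp2
    subst hp1; subst hp2
    rcases hj with h0 | ⟨⟨h1, h2⟩, hne⟩
    · subst h0
      exact ⟨addable_iff_col'.mpr ⟨rfl, Or.inl rfl⟩, by omega⟩
    · refine ⟨addable_iff_col'.mpr ⟨rfl, Or.inr ?_⟩, h2⟩
      have := Λ.colLen_anti (j - 1) j (by omega)
      omega

lemma adds_hi (hmem : (r, c) ∈ Λ) (hrow0 : Λ.rowLen r = c + 1) (hcol0 : Λ.colLen c = r + 1) :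
    (adds Λ).filter (fun p => ¬ p.2 ≤ c)
      = (insert 0 (colF Λ r)).image (fun i => (i, Λ.rowLen i)) := by
  ext ⟨a, b⟩
  simp only [mem_filter, mem_image, mem_insert, mem_adds, colF, mem_filter, mem_Icc]
  constructor
  · rintro ⟨hadd, hb⟩
    obtain ⟨hbr, hcor⟩ := addable_iff_row'.mp hadd
    have har : a ≤ r := by
      have h1 : (a, c) ∈ Λ := YoungDiagram.mem_iff_lt_rowLen.mpr (by omega)
      have := YoungDiagram.mem_iff_lt_colLen.mp h1
      omega
    refine ⟨a, ?_, by rw [Prod.ext_iff]; exact ⟨rfl, by rw [hbr]⟩⟩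
    rcases hcor with h0 | hlt
    · exact Or.inl h0
    · rcases Nat.eq_zero_or_pos a with h0 | h0
      · exact Or.inl h0
      · exact Or.inr ⟨⟨h0, har⟩, by omega⟩
  · rintro ⟨i, hi, hp⟩
    injection hp with hp1 hp2
    subst hp1; subst hp2
    rcases hi with h0 | ⟨⟨h1, h2⟩, hne⟩
    · subst h0
      have : c + 1 ≤ Λ.rowLen 0 := hrow0 ▸ Λ.rowLen_anti 0 r (Nat.zero_le r)
      exact ⟨addable_iff_row'.mpr ⟨rfl, Or.inl rfl⟩, by omega⟩
    · have hlt : Λ.rowLen i < Λ.rowLen (i - 1) := by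
        have := Λ.rowLen_anti (i - 1) i (by omega)
        omega
      have : c + 1 ≤ Λ.rowLen i := hrow0 ▸ Λ.rowLen_anti i r h2
      exact ⟨addable_iff_row'.mpr ⟨rfl, Or.inr hlt⟩, by omega⟩

lemma N_split (hα : 0 < α) (hmem : (r, c) ∈ Λ)
    (hrow0 : Λ.rowLen r = c + 1) (hcol0 : Λ.colLen c = r + 1) (v : ℝ) :
    ∏ p ∈ adds Λ, (v - alphaContent α p)
      = ((v - (α * ((0:ℕ):ℝ) - (Λ.colLen 0 : ℝ)))
            * ∏ j ∈ rowF Λ c, (v - (α * (j:ℝ) - (Λ.colLen j : ℝ))))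
        * ((v - (α * (Λ.rowLen 0 : ℝ) - ((0:ℕ):ℝ)))
            * ∏ i ∈ colF Λ r, (v - (α * (Λ.rowLen i : ℝ) - (i:ℝ)))) := by
  rw [← Finset.prod_filter_mul_prod_filter_not (adds Λ) (fun p => p.2 ≤ c),
    adds_lo hrow0 hcol0, adds_hi hmem hrow0 hcol0]
  rw [Finset.prod_image (by intro x hx y hy h; rw [Prod.ext_iff] at h; exact h.2),
    Finset.prod_image (by intro x hx y hy h; rw [Prod.ext_iff] at h; exact h.1)]
  rw [Finset.prod_insert (by simp [rowF]), Finset.prod_insert (by simp [colF])]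
  simp only [alphaContent]
end NS



section DS
variable {α : ℝ} {Λ : YoungDiagram} {r c : ℕ}

lemma rems_lo (hrow0 : Λ.rowLen r = c + 1) (hcol0 : Λ.colLen c = r + 1) :
    ((rems Λ).erase (r, c)).filter (fun p => p.2 < c)
      = (rowF Λ c).image (fun j => (Λ.colLen (j - 1) - 1, j - 1)) := by
  ext ⟨a, b⟩
  simp only [mem_filter, mem_erase, mem_image, mem_rems, rowF, mem_filter, mem_Icc]
  constructor
  · rintro ⟨⟨hne, hrem⟩, hb⟩
    obtain ⟨h1, h2⟩ := removable_iff'.mp hrem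
    refine ⟨b + 1, ⟨⟨by omega, by omega⟩, ?_⟩, ?_⟩
    · simp only [Nat.add_sub_cancel]
      have : Λ.colLen (b + 1) ≤ a := by
        refine colLen_le' ?_
        intro hmem'
        have := lt_rowLen' hmem'
        omega
      omega
    · simp only [Nat.add_sub_cancel]
      rw [Prod.ext_iff]
      constructor
      · simp only []; omega
      · simp only []
  · rintro ⟨j, ⟨⟨hj1, hj2⟩, hne⟩, hp⟩
    injection hp with hp1 hp2
    have hKc : r + 1 ≤ Λ.colLen (j - 1) := hcol0 ▸ Λ.colLen_anti (j - 1) c (by omega)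
    have hKlt : Λ.colLen j < Λ.colLen (j - 1) := by
      have := Λ.colLen_anti (j - 1) j (by omega)
      omega
    have hmem1 : (Λ.colLen (j - 1) - 1, j - 1) ∈ Λ :=
      YoungDiagram.mem_iff_lt_colLen.mpr (by omega)
    have hnmem : (Λ.colLen (j - 1) - 1, j) ∉ Λ := by
      intro h
      have := lt_colLen' h
      omega
    have hrl : Λ.rowLen (Λ.colLen (j - 1) - 1) = j := by
      have hle := rowLen_le' hnmem
      have hgt := lt_rowLen' hmem1
      omega
    have hrem : Removable Λ (Λ.colLen (j - 1) - 1, j - 1) := by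
      rw [removable_iff']
      constructor
      · rw [hrl]; omega
      · omega
    subst hp1; subst hp2
    refine ⟨⟨?_, hrem⟩, by omega⟩
    intro heq
    injection heq with e1 e2
    omega

lemma rems_hi (hrow0 : Λ.rowLen r = c + 1) (hcol0 : Λ.colLen c = r + 1) :
    ((rems Λ).erase (r, c)).filter (fun p => ¬ p.2 < c)
      = (colF Λ r).image (fun i => (i - 1, Λ.rowLen (i - 1) - 1)) := by
  have hclen : Λ.colLen (c + 1) ≤ r := by
    refine colLen_le' ?_
    intro h
    have := lt_rowLen' h
    omega
  ext ⟨a, b⟩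
  simp only [mem_filter, mem_erase, mem_image, mem_rems, colF, mem_filter, mem_Icc]
  constructor
  · rintro ⟨⟨hne, hrem⟩, hb⟩
    obtain ⟨h1, h2⟩ := removable_iff'.mp hrem
    have hbc : c < b := by
      rcases Nat.lt_or_ge c b with h | h
      · exact h
      · have hbceq : b = c := by omega
        subst hbceq
        exfalso
        exact hne (by rw [Prod.ext_iff]; constructor <;> simp only [] <;> omega)
    have har : a + 1 ≤ r := by
      have := Λ.colLen_anti (c + 1) b (by omega)
      omega
    refine ⟨a + 1, ⟨⟨by omega, by omega⟩, ?_⟩, ?_⟩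
    · simp only [Nat.add_sub_cancel]
      have : Λ.rowLen (a + 1) ≤ b := by
        refine rowLen_le' ?_
        intro hmem'
        have := lt_colLen' hmem'
        omega
      omega
    · simp only [Nat.add_sub_cancel]
      rw [Prod.ext_iff]
      exact ⟨by simp only [], by simp only []; omega⟩
  · rintro ⟨i, ⟨⟨hi1, hi2⟩, hne⟩, hp⟩
    injection hp with hp1 hp2
    have hRc : c + 1 ≤ Λ.rowLen i := hrow0 ▸ Λ.rowLen_anti i r hi2
    have hRlt : Λ.rowLen i < Λ.rowLen (i - 1) := by
      have := Λ.rowLen_anti (i - 1) i (by omega)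
      omega
    have hmem1 : (i - 1, Λ.rowLen (i - 1) - 1) ∈ Λ :=
      YoungDiagram.mem_iff_lt_rowLen.mpr (by omega)
    have hnmem : (i, Λ.rowLen (i - 1) - 1) ∉ Λ := by
      intro h
      have := lt_rowLen' h
      omega
    have hcl : Λ.colLen (Λ.rowLen (i - 1) - 1) = i := by
      have hle := colLen_le' hnmem
      have hgt := lt_colLen' hmem1
      omega
    have hrem : Removable Λ (i - 1, Λ.rowLen (i - 1) - 1) := by
      rw [removable_iff']
      constructor
      · omega
      · rw [hcl]; omega
    subst hp1; subst hp2
    refine ⟨⟨?_, hrem⟩, by omega⟩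
    intro heq
    injection heq with e1 e2
    omega

lemma D_split (hrow0 : Λ.rowLen r = c + 1) (hcol0 : Λ.colLen c = r + 1) (v : ℝ) :
    ∏ p ∈ (rems Λ).erase (r, c), (v - upperAlphaContent α p)
      = (∏ j ∈ rowF Λ c, (v - (α * (((j - 1 : ℕ):ℝ) + 1) - (Λ.colLen (j - 1) : ℝ))))
        * ∏ i ∈ colF Λ r, (v - (α * (Λ.rowLen (i - 1) : ℝ) - (((i - 1 : ℕ):ℝ) + 1))) := by
  rw [← Finset.prod_filter_mul_prod_filter_not ((rems Λ).erase (r, c)) (fun p => p.2 < c),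
    rems_lo hrow0 hcol0, rems_hi hrow0 hcol0]
  rw [Finset.prod_image (by
      intro x hx y hy h
      simp only [rowF, Finset.mem_coe, mem_filter, mem_Icc] at hx hy
      injection h with h1 h2
      omega),
    Finset.prod_image (by
      intro x hx y hy h
      simp only [colF, Finset.mem_coe, mem_filter, mem_Icc] at hx hy
      injection h with h1 h2
      omega)]
  congr 1
  · refine Finset.prod_congr rfl fun j hj => ?_
    simp only [rowF, mem_filter, mem_Icc] at hj
    have hKc : r + 1 ≤ Λ.colLen (j - 1) := hcol0 ▸ Λ.colLen_anti (j - 1) c (by omega)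
    rw [upperAlphaContent]
    simp only []
    rw [Nat.cast_sub (by omega : 1 ≤ Λ.colLen (j - 1))]
    push_cast
    ring_nf
  · refine Finset.prod_congr rfl fun i hi => ?_
    simp only [colF, mem_filter, mem_Icc] at hi
    have hRc : c + 1 ≤ Λ.rowLen (i - 1) := hrow0 ▸ Λ.rowLen_anti (i - 1) r (by omega)
    rw [upperAlphaContent]
    simp only []
    rw [Nat.cast_sub (by omega : 1 ≤ Λ.rowLen (i - 1))]
    push_cast
    ring_nf
end DS


section Inj
variable {α : ℝ} {Λ : YoungDiagram}

lemma content_inj (hα : 0 < α) {p q : ℕ × ℕ} (hp : Addable Λ p) (hq : Addable Λ q)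
    (h : alphaContent α p = alphaContent α q) : p = q := by
  obtain ⟨a, b⟩ := p
  obtain ⟨a', b'⟩ := q
  have h1 := (addable_iff_col'.mp hp).1
  have h2 := (addable_iff_col'.mp hq).1
  rw [alphaContent, alphaContent] at h
  simp only at h h1 h2
  have key : b = b' := by
    by_contra hne
    rcases Nat.lt_or_ge b b' with hbb | hbb
    · have hcl : Λ.colLen b' ≤ Λ.colLen b := Λ.colLen_anti b b' (le_of_lt hbb)
      have c1 : (b:ℝ) + 1 ≤ (b':ℝ) := by exact_mod_cast hbb
      have c2 : (a':ℝ) ≤ (a:ℝ) := by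
        have : Λ.colLen b' ≤ Λ.colLen b := hcl
        subst h1; subst h2; exact_mod_cast this
      nlinarith
    · have hbb' : b' < b := by omega
      have hcl : Λ.colLen b ≤ Λ.colLen b' := Λ.colLen_anti b' b (le_of_lt hbb')
      have c1 : (b':ℝ) + 1 ≤ (b:ℝ) := by exact_mod_cast hbb'
      have c2 : (a:ℝ) ≤ (a':ℝ) := by
        subst h1; subst h2; exact_mod_cast hcl
      nlinarith
  subst key
  rw [Prod.ext_iff]
  exact ⟨by omega, rfl⟩

lemma ucontent_inj (hα : 0 < α) {p q : ℕ × ℕ} (hp : Removable Λ p) (hq : Removable Λ q)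
    (h : upperAlphaContent α p = upperAlphaContent α q) : p = q := by
  obtain ⟨a, b⟩ := p
  obtain ⟨a', b'⟩ := q
  have h1 := (removable_iff'.mp hp).2
  have h2 := (removable_iff'.mp hq).2
  rw [upperAlphaContent, upperAlphaContent] at h
  simp only at h h1 h2
  have key : b = b' := by
    by_contra hne
    rcases Nat.lt_or_ge b b' with hbb | hbb
    · have hcl : Λ.colLen b' ≤ Λ.colLen b := Λ.colLen_anti b b' (le_of_lt hbb)
      have c1 : (b:ℝ) + 1 ≤ (b':ℝ) := by exact_mod_cast hbb
      have c2 : (a':ℝ) ≤ (a:ℝ) := by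
        have : a' + 1 ≤ a + 1 := by omega
        exact_mod_cast Nat.succ_le_succ_iff.mp this
      nlinarith
    · have hbb' : b' < b := by omega
      have hcl : Λ.colLen b ≤ Λ.colLen b' := Λ.colLen_anti b' b (le_of_lt hbb')
      have c1 : (b':ℝ) + 1 ≤ (b:ℝ) := by exact_mod_cast hbb'
      have c2 : (a:ℝ) ≤ (a':ℝ) := by
        have : a + 1 ≤ a' + 1 := by omega
        exact_mod_cast Nat.succ_le_succ_iff.mp this
      nlinarith
  subst key
  rw [Prod.ext_iff]
  exact ⟨by omega, rfl⟩

lemma dim_ratio (hα : 0 < α) {lam : YoungDiagram} (hcard : Λ.card = lam.card + 1) :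
    jackDim α lam / jackDim α Λ
      = (∏ b ∈ Λ.cells, hk α Λ b) / ((Λ.card : ℝ) * α * ∏ b ∈ lam.cells, hk α lam b) := by
  have hrw : ∀ μ : YoungDiagram,
      jackDim α μ = (μ.card.factorial : ℝ) * α ^ μ.card * (∏ b ∈ μ.cells, hk α μ b)⁻¹ := by
    intro μ
    rw [jackDim, Finset.prod_inv_distrib]
    rfl
  rw [hrw, hrw, hcard]
  have hHΛ : (∏ b ∈ Λ.cells, hk α Λ b) ≠ 0 := Finset.prod_ne_zero_iff.mpr fun b _ => hk_ne hα Λ b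
  have hHl : (∏ b ∈ lam.cells, hk α lam b) ≠ 0 :=
    Finset.prod_ne_zero_iff.mpr fun b _ => hk_ne hα lam b
  have hαne : α ≠ 0 := ne_of_gt hα
  have hfac : ((lam.card.factorial : ℝ)) ≠ 0 := by positivity
  rw [Nat.factorial_succ]
  push_cast
  rw [pow_succ]
  field_simp
end Inj

section RHS
variable {α : ℝ}

lemma rhs_reshape (u M : ℝ) (x y : ℕ → ℝ) (d k : ℕ)
    (hk1 : 1 ≤ k) (hk2 : k ≤ d - 1) (hd2 : 2 ≤ d) :
    (x d - u) * (u - x 1) / M *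
        (∏ i ∈ Finset.Icc 1 (k - 1), (u - x (i + 1)) / (u - y i)) *
        ∏ j ∈ Finset.Icc (k + 1) (d - 1), (u - x j) / (u - y j)
      = -(∏ m ∈ Icc 1 d, (u - x m)) / (M * ∏ m ∈ (Icc 1 (d - 1)).erase k, (u - y m)) := by
  have hnum1 : ∏ i ∈ Icc 1 (k - 1), (u - x (i + 1)) = ∏ i ∈ Icc 2 k, (u - x i) := by
    refine Finset.prod_nbij' (fun j => j + 1) (fun j => j - 1) ?_ ?_ ?_ ?_ ?_
    · intro a ha; simp only [mem_Icc] at ha ⊢; omega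
    · intro a ha; simp only [mem_Icc] at ha ⊢; omega
    · intro a ha; simp only [mem_Icc] at ha; show a + 1 - 1 = a; omega
    · intro a ha; simp only [mem_Icc] at ha; show a - 1 + 1 = a; omega
    · intro a ha; rfl
  have hmerge : (∏ i ∈ Icc 2 k, (u - x i)) * (∏ j ∈ Icc (k + 1) (d - 1), (u - x j))
      = ∏ i ∈ Icc 2 (d - 1), (u - x i) := by
    rw [← Finset.prod_union (by
      rw [Finset.disjoint_left]
      intro a ha ha'
      simp only [mem_Icc] at ha ha'
      omega)]
    refine Finset.prod_congr ?_ fun _ _ => rfl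
    ext a
    simp only [mem_union, mem_Icc]
    omega
  have hx1d : (u - x 1) * ∏ i ∈ Icc 2 (d - 1), (u - x i) = ∏ i ∈ Icc 1 (d - 1), (u - x i) := by
    rw [← Finset.mul_prod_erase _ _ (by simp only [mem_Icc]; omega : (1:ℕ) ∈ Icc 1 (d - 1))]
    congr 1
    refine Finset.prod_congr ?_ fun _ _ => rfl
    ext a
    simp only [mem_Icc, mem_erase]
    omega
  have hxd : (u - x d) * ∏ i ∈ Icc 1 (d - 1), (u - x i) = ∏ i ∈ Icc 1 d, (u - x i) := by
    rw [← Finset.mul_prod_erase _ _ (by simp only [mem_Icc]; omega : d ∈ Icc 1 d)]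
    congr 1
    refine Finset.prod_congr ?_ fun _ _ => rfl
    ext a
    simp only [mem_Icc, mem_erase]
    omega
  have hden : (∏ i ∈ Icc 1 (k - 1), (u - y i)) * (∏ j ∈ Icc (k + 1) (d - 1), (u - y j))
      = ∏ m ∈ (Icc 1 (d - 1)).erase k, (u - y m) := by
    rw [← Finset.prod_union (by
      rw [Finset.disjoint_left]
      intro a ha ha'
      simp only [mem_Icc] at ha ha'
      omega)]
    congr 1
    ext a
    simp only [mem_union, mem_Icc, mem_erase]
    omega
  rw [Finset.prod_div_distrib, Finset.prod_div_distrib, hnum1, ← hden, ← hxd, ← hx1d, ← hmerge]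
  ring
end RHS

end YD

/-- The α-co-transition probability `κ_α(λ,Λ) dim_α λ / dim_α Λ`, for `λ` obtained from `Λ`
by removing the removable box of upper α-content `y_k(α)`, equals the analytic co-transition
weight of the interlacing sequences `x₁(α) < y₁(α) < ⋯ < y_{d−1}(α) < x_d(α)` of `Λ`. -/
theorem jack_cotransition_eq_analytic (α : ℝ) (hα : 0 < α)
    (Λ lam : YoungDiagram) (n : ℕ) (hn : n = Λ.card)
    (d k : ℕ) (hd : 1 ≤ d) (hk1 : 1 ≤ k) (hk2 : k ≤ d - 1)
    (x y : ℕ → ℝ)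
    -- the sequences interlace: x₁ < y₁ < x₂ < ⋯ < y_{d-1} < x_d
    (hinter : ∀ m, 1 ≤ m → m ≤ d - 1 → x m < y m ∧ y m < x (m + 1))
    -- x₁(α),…,x_d(α) are exactly the α-contents of the addable boxes of Λ
    (hx1 : ∀ m, 1 ≤ m → m ≤ d → ∃ c, Addable Λ c ∧ alphaContent α c = x m)
    (hx2 : ∀ c, Addable Λ c → ∃ m, 1 ≤ m ∧ m ≤ d ∧ alphaContent α c = x m)
    -- y₁(α),…,y_{d-1}(α) are exactly the upper α-contents of the removable boxes of Λ
    (hy1 : ∀ m, 1 ≤ m → m ≤ d - 1 → ∃ c, Removable Λ c ∧ upperAlphaContent α c = y m)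
    (hy2 : ∀ c, Removable Λ c → ∃ m, 1 ≤ m ∧ m ≤ d - 1 ∧ upperAlphaContent α c = y m)
    -- λ is obtained from Λ by removing the removable box of upper α-content y k
    (b0 : ℕ × ℕ) (hb0 : Removable Λ b0) (hb0y : upperAlphaContent α b0 = y k)
    (hlam : lam.cells = Λ.cells.erase b0) :
    jackMult α lam Λ * jackDim α lam / jackDim α Λ =
      (x d - y k) * (y k - x 1) / ((n : ℝ) * α) *
        (∏ i ∈ Finset.Icc 1 (k - 1), (y k - x (i + 1)) / (y k - y i)) *
        ∏ j ∈ Finset.Icc (k + 1) (d - 1), (y k - x j) / (y k - y j) := by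

  obtain ⟨r, c⟩ := b0
  obtain ⟨hrow0, hcol0⟩ := YD.removable_iff'.mp hb0
  have hmem : (r, c) ∈ Λ := hb0.1
  have hαne : α ≠ 0 := ne_of_gt hα
  have hd2 : 2 ≤ d := by omega
  have hlr := YD.lam_rowLen hmem hrow0 hlam
  have hlc := YD.lam_colLen hmem hcol0 hlam
  have hRanti : ∀ i, i ≤ r → c + 1 ≤ Λ.rowLen i := fun i hi => hrow0 ▸ Λ.rowLen_anti i r hi
  have hKanti : ∀ j, j ≤ c → r + 1 ≤ Λ.colLen j := fun j hj => hcol0 ▸ Λ.colLen_anti j c hj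
  have hcard : Λ.card = lam.card + 1 := by
    have h1 : lam.cells.card = Λ.cells.card - 1 := by
      rw [hlam, Finset.card_erase_of_mem hb0.1]
    have h2 : 1 ≤ Λ.cells.card := Finset.card_pos.mpr ⟨_, hb0.1⟩
    simp only [YoungDiagram.card]
    omega
  have hnR : (n : ℝ) = (Λ.card : ℝ) := by exact_mod_cast congrArg (Nat.cast (R := ℝ)) hn
  -- monotonicity of the interlacing sequences
  have hxlt : ∀ m, 1 ≤ m → m ≤ d - 1 → x m < x (m + 1) := fun m h1 h2 =>
    lt_trans (hinter m h1 h2).1 (hinter m h1 h2).2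
  have hxmono : ∀ b a, 1 ≤ a → a < b → b ≤ d → x a < x b := by
    intro b
    induction b with
    | zero => intro a h1 h2 h3; omega
    | succ m ih =>
      intro a h1 h2 h3
      rcases Nat.lt_or_ge a m with h | h
      · exact lt_trans (ih a h1 h (by omega)) (hxlt m (by omega) (by omega))
      · have ham : a = m := by omega
        subst ham
        exact hxlt a h1 (by omega)
  have hymono : ∀ b a, 1 ≤ a → a < b → b ≤ d - 1 → y a < y b := by
    intro b a h1 h2 h3
    have s1 : y a < x (a + 1) := (hinter a h1 (by omega)).2
    have s2 : x b < y b := (hinter b (by omega) h3).1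
    rcases eq_or_lt_of_le (by omega : a + 1 ≤ b) with h | h
    · subst h
      exact lt_trans s1 s2
    · exact lt_trans s1 (lt_trans (hxmono b (a + 1) (by omega) h (by omega)) s2)
  have hxinj : ∀ a ∈ Finset.Icc 1 d, ∀ b ∈ Finset.Icc 1 d, x a = x b → a = b := by
    intro a ha b hb hab
    simp only [Finset.mem_Icc] at ha hb
    by_contra hne
    rcases Nat.lt_or_ge a b with h | h
    · exact absurd hab (ne_of_lt (hxmono b a ha.1 h hb.2))
    · have h' : b < a := by omega
      exact absurd hab.symm (ne_of_lt (hxmono a b hb.1 h' ha.2))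
  have hyinj : ∀ a ∈ Finset.Icc 1 (d - 1), ∀ b ∈ Finset.Icc 1 (d - 1), y a = y b → a = b := by
    intro a ha b hb hab
    simp only [Finset.mem_Icc] at ha hb
    by_contra hne
    rcases Nat.lt_or_ge a b with h | h
    · exact absurd hab (ne_of_lt (hymono b a ha.1 h hb.2))
    · have h' : b < a := by omega
      exact absurd hab.symm (ne_of_lt (hymono a b hb.1 h' ha.2))
  -- the value u = y k
  set v : ℝ := α * ((c : ℝ) + 1) - ((r : ℝ) + 1) with hvdef
  have hyk : y k = v := by
    rw [← hb0y, hvdef]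
    simp [upperAlphaContent]
  -- image identities
  have himgx : (Finset.Icc 1 d).image x = (YD.adds Λ).image (alphaContent α) := by
    ext t
    simp only [Finset.mem_image]
    constructor
    · rintro ⟨m, hm, rfl⟩
      simp only [Finset.mem_Icc] at hm
      obtain ⟨p, hp, hpc⟩ := hx1 m hm.1 hm.2
      exact ⟨p, YD.mem_adds.mpr hp, hpc⟩
    · rintro ⟨p, hp, rfl⟩
      obtain ⟨m, h1, h2, h3⟩ := hx2 p (YD.mem_adds.mp hp)
      exact ⟨m, Finset.mem_Icc.mpr ⟨h1, h2⟩, h3.symm⟩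
  have himgy : (Finset.Icc 1 (d - 1)).image y = (YD.rems Λ).image (upperAlphaContent α) := by
    ext t
    simp only [Finset.mem_image]
    constructor
    · rintro ⟨m, hm, rfl⟩
      simp only [Finset.mem_Icc] at hm
      obtain ⟨p, hp, hpc⟩ := hy1 m hm.1 hm.2
      exact ⟨p, YD.mem_rems.mpr hp, hpc⟩
    · rintro ⟨p, hp, rfl⟩
      obtain ⟨m, h1, h2, h3⟩ := hy2 p (YD.mem_rems.mp hp)
      exact ⟨m, Finset.mem_Icc.mpr ⟨h1, h2⟩, h3.symm⟩
  have hcij : ∀ p ∈ YD.adds Λ, ∀ q ∈ YD.adds Λ,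
      alphaContent α p = alphaContent α q → p = q :=
    fun p hp q hq h => YD.content_inj hα (YD.mem_adds.mp hp) (YD.mem_adds.mp hq) h
  have huij : ∀ p ∈ YD.rems Λ, ∀ q ∈ YD.rems Λ,
      upperAlphaContent α p = upperAlphaContent α q → p = q :=
    fun p hp q hq h => YD.ucontent_inj hα (YD.mem_rems.mp hp) (YD.mem_rems.mp hq) h
  have hNX : ∏ m ∈ Finset.Icc 1 d, (v - x m) = ∏ p ∈ YD.adds Λ, (v - alphaContent α p) := by
    have eA := Finset.prod_image (f := fun t : ℝ => v - t) hxinj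
    have eB := Finset.prod_image (f := fun t : ℝ => v - t) hcij
    calc ∏ m ∈ Finset.Icc 1 d, (v - x m)
        = ∏ t ∈ (Finset.Icc 1 d).image x, (v - t) := eA.symm
      _ = ∏ t ∈ (YD.adds Λ).image (alphaContent α), (v - t) := by rw [himgx]
      _ = _ := eB
  have hkIcc : k ∈ Finset.Icc 1 (d - 1) := Finset.mem_Icc.mpr ⟨hk1, hk2⟩
  have hb0rems : (r, c) ∈ YD.rems Λ := YD.mem_rems.mpr hb0
  have hyinjOn : Set.InjOn y ((Finset.Icc 1 (d - 1) : Finset ℕ) : Set ℕ) := by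
    intro a ha b hb h
    exact hyinj a (Finset.mem_coe.mp ha) b (Finset.mem_coe.mp hb) h
  have huinjOn : Set.InjOn (upperAlphaContent α) ((YD.rems Λ : Finset (ℕ × ℕ)) : Set (ℕ × ℕ)) := by
    intro a ha b hb h
    exact huij a (Finset.mem_coe.mp ha) b (Finset.mem_coe.mp hb) h
  have e2 : ((Finset.Icc 1 (d - 1)).erase k).image y
      = ((YD.rems Λ).erase (r, c)).image (upperAlphaContent α) := by
    rw [YD.image_erase_of_injOn hyinjOn hkIcc, YD.image_erase_of_injOn' huinjOn hb0rems,
      himgy, hb0y]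
  have hDY : ∏ m ∈ (Finset.Icc 1 (d - 1)).erase k, (v - y m)
      = ∏ p ∈ (YD.rems Λ).erase (r, c), (v - upperAlphaContent α p) := by
    have eA := Finset.prod_image (s := (Finset.Icc 1 (d - 1)).erase k) (g := y)
        (f := fun t : ℝ => v - t)
        (fun a ha b hb h => hyinj a (Finset.mem_of_mem_erase ha) b (Finset.mem_of_mem_erase hb) h)
    have eB := Finset.prod_image (s := (YD.rems Λ).erase (r, c)) (g := upperAlphaContent α)
        (f := fun t : ℝ => v - t)
        (fun a ha b hb h => huij a (Finset.mem_of_mem_erase ha) b (Finset.mem_of_mem_erase hb) h)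
    calc ∏ m ∈ (Finset.Icc 1 (d - 1)).erase k, (v - y m)
        = ∏ t ∈ ((Finset.Icc 1 (d - 1)).erase k).image y, (v - t) := eA.symm
      _ = ∏ t ∈ ((YD.rems Λ).erase (r, c)).image (upperAlphaContent α), (v - t) := by rw [e2]
      _ = _ := eB
  -- LHS reduction
  have hHcalc : jackMult α lam Λ * jackDim α lam / jackDim α Λ
      = (α * (∏ j ∈ Finset.range c, (YD.hk α Λ (r, j) / YD.hk α lam (r, j)))
          * ∏ i ∈ Finset.range r, (YD.kf α lam (i, c) * (YD.hk α Λ (i, c) / YD.hk α lam (i, c))))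
        / ((Λ.card : ℝ) * α) := by
    rw [mul_div_assoc, YD.dim_ratio hα hcard,
      ← YD.hook_ratio hα hmem hrow0 hcol0 hlam hlr hlc]
    ring
  have hrprod : ∏ j ∈ Finset.range c, (YD.hk α Λ (r, j) / YD.hk α lam (r, j))
      = ∏ j ∈ Finset.range c,
          ((v - (α * (j : ℝ) - (Λ.colLen j : ℝ))) / (v - (α * ((j : ℝ) + 1) - (Λ.colLen j : ℝ)))) := by
    refine Finset.prod_congr rfl fun j hj => ?_
    rw [hvdef]
    exact YD.rowfac (Λ := Λ) (lam := lam) hα hrow0 hcol0 hlr hlc (Finset.mem_range.mp hj)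
  have hcprod : ∏ i ∈ Finset.range r, (YD.kf α lam (i, c) * (YD.hk α Λ (i, c) / YD.hk α lam (i, c)))
      = ∏ i ∈ Finset.range r,
          ((v - (α * (Λ.rowLen i : ℝ) - (i : ℝ))) / (v - (α * (Λ.rowLen i : ℝ) - ((i : ℝ) + 1)))) := by
    refine Finset.prod_congr rfl fun i hi => ?_
    rw [hvdef]
    exact YD.colfac (Λ := Λ) (lam := lam) hα hrow0 hcol0 hRanti hlr hlc (Finset.mem_range.mp hi)
  classical
  -- row telescope
  have hrowtel : α * ∏ j ∈ Finset.range c,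
        ((v - (α * (j : ℝ) - (Λ.colLen j : ℝ))) / (v - (α * ((j : ℝ) + 1) - (Λ.colLen j : ℝ))))
      = (v - (α * ((0 : ℕ) : ℝ) - (Λ.colLen 0 : ℝ)))
        * ∏ j ∈ YD.rowF Λ c,
            ((v - (α * (j : ℝ) - (Λ.colLen j : ℝ)))
              / (v - (α * (((j - 1 : ℕ) : ℝ) + 1) - (Λ.colLen (j - 1) : ℝ)))) := by
    have h0 : v - (α * ((c : ℕ) : ℝ) - (Λ.colLen c : ℝ)) = α := by
      rw [hvdef, hcol0]; push_cast; ring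
    have hXY : ∀ j, 1 ≤ j → j ≤ c → ¬ (Λ.colLen (j - 1) ≠ Λ.colLen j) →
        (fun t : ℕ => α * ((t : ℝ) + 1) - (Λ.colLen t : ℝ)) (j - 1)
          = (fun t : ℕ => α * (t : ℝ) - (Λ.colLen t : ℝ)) j := by
      intro j h1 h2 h3
      simp only [not_not] at h3
      simp only []
      rw [h3, Nat.cast_sub h1]
      push_cast
      ring
    have hX : ∀ j, 1 ≤ j → j ≤ c →
        v - (fun t : ℕ => α * (t : ℝ) - (Λ.colLen t : ℝ)) j ≠ 0 := by
      intro j h1 h2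
      simp only []
      have c1 : (j : ℝ) ≤ (c : ℝ) := by exact_mod_cast h2
      have c2 : ((r : ℝ) + 1) ≤ (Λ.colLen j : ℝ) := by exact_mod_cast hKanti j h2
      have c3 : 0 ≤ α * ((c : ℝ) - (j : ℝ)) := mul_nonneg hα.le (by linarith)
      rw [hvdef]
      nlinarith
    have tele := YD.telescope v (fun t : ℕ => α * (t : ℝ) - (Λ.colLen t : ℝ))
      (fun t : ℕ => α * ((t : ℝ) + 1) - (Λ.colLen t : ℝ)) c
      (fun j => Λ.colLen (j - 1) ≠ Λ.colLen j) hXY hX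
    calc α * ∏ j ∈ Finset.range c,
          ((v - (α * (j : ℝ) - (Λ.colLen j : ℝ))) / (v - (α * ((j : ℝ) + 1) - (Λ.colLen j : ℝ))))
        = (∏ j ∈ Finset.range (c + 1), (v - (α * (j : ℝ) - (Λ.colLen j : ℝ))))
          / (∏ j ∈ Finset.range c, (v - (α * ((j : ℝ) + 1) - (Λ.colLen j : ℝ)))) := by
          rw [Finset.prod_range_succ, Finset.prod_div_distrib, h0]
          ring
      _ = _ := tele
  -- column telescope
  have hcoltel : ∏ i ∈ Finset.range r,
        ((v - (α * (Λ.rowLen i : ℝ) - (i : ℝ))) / (v - (α * (Λ.rowLen i : ℝ) - ((i : ℝ) + 1))))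
      = -((v - (α * (Λ.rowLen 0 : ℝ) - ((0 : ℕ) : ℝ)))
          * ∏ i ∈ YD.colF Λ r,
              ((v - (α * (Λ.rowLen i : ℝ) - (i : ℝ)))
                / (v - (α * (Λ.rowLen (i - 1) : ℝ) - (((i - 1 : ℕ) : ℝ) + 1))))) := by
    have h0' : v - (α * (Λ.rowLen r : ℝ) - ((r : ℕ) : ℝ)) = -1 := by
      rw [hvdef, hrow0]; push_cast; ring
    have hXY' : ∀ i, 1 ≤ i → i ≤ r → ¬ (Λ.rowLen (i - 1) ≠ Λ.rowLen i) →
        (fun t : ℕ => α * (Λ.rowLen t : ℝ) - ((t : ℝ) + 1)) (i - 1)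
          = (fun t : ℕ => α * (Λ.rowLen t : ℝ) - (t : ℝ)) i := by
      intro i h1 h2 h3
      simp only [not_not] at h3
      simp only []
      rw [h3, Nat.cast_sub h1]
      push_cast
      ring
    have hX' : ∀ i, 1 ≤ i → i ≤ r →
        v - (fun t : ℕ => α * (Λ.rowLen t : ℝ) - (t : ℝ)) i ≠ 0 := by
      intro i h1 h2
      simp only []
      have c1 : (i : ℝ) ≤ (r : ℝ) := by exact_mod_cast h2
      have c2 : ((c : ℝ) + 1) ≤ (Λ.rowLen i : ℝ) := by exact_mod_cast hRanti i h2
      have c3 : 0 ≤ α * ((Λ.rowLen i : ℝ) - ((c : ℝ) + 1)) := mul_nonneg hα.le (by linarith)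
      rw [hvdef]
      intro hzero
      nlinarith
    have tele := YD.telescope v (fun t : ℕ => α * (Λ.rowLen t : ℝ) - (t : ℝ))
      (fun t : ℕ => α * (Λ.rowLen t : ℝ) - ((t : ℝ) + 1)) r
      (fun i => Λ.rowLen (i - 1) ≠ Λ.rowLen i) hXY' hX'
    rw [Finset.prod_range_succ, h0'] at tele
    have tele2 : ((∏ i ∈ Finset.range r, (v - (α * (Λ.rowLen i : ℝ) - (i : ℝ)))) * (-1))
        / (∏ i ∈ Finset.range r, (v - (α * (Λ.rowLen i : ℝ) - ((i : ℝ) + 1))))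
        = (v - (α * (Λ.rowLen 0 : ℝ) - ((0 : ℕ) : ℝ)))
          * ∏ i ∈ YD.colF Λ r,
              ((v - (α * (Λ.rowLen i : ℝ) - (i : ℝ)))
                / (v - (α * (Λ.rowLen (i - 1) : ℝ) - (((i - 1 : ℕ) : ℝ) + 1)))) := tele
    rw [Finset.prod_div_distrib, ← tele2]
    ring
  -- put everything together
  rw [YD.rhs_reshape (y k) ((n : ℝ) * α) x y d k hk1 hk2 hd2]
  rw [hyk, hHcalc, hrprod, hcprod, hrowtel, hcoltel, hnR]
  rw [hNX, hDY, YD.N_split hα hmem hrow0 hcol0 v, YD.D_split (α := α) hrow0 hcol0 v]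
  rw [Finset.prod_div_distrib, Finset.prod_div_distrib]
  ring
end
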